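/- arXiv:2510.17365 — 12 statements merged into one kernel-verified Lean document; each statement's English description precedes it below -/
import Mathlib

section
/- Let W be an irreducible transition rate matrix on the finite state space {1, …, L}. Then 0 is an eigenvalue of W of algebraic multiplicity one, i.e., 0 is a simple root of the characteristic polynomial of W. -/
/-- `W` is a transition rate matrix: nonnegative off-diagonal entries and
every column sums to zero. -/
def IsTransitionRateMatrix {L : ℕ} (W : Matrix (Fin L) (Fin L) ℝ) : Prop :=
  (∀ n n' : Fin L, n ≠ n' → 0 ≤ W n n') ∧ (∀ n' : Fin L, ∑ n, W n n' = 0)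

/-- `W` is irreducible: any two distinct states are connected by a path of
strictly positive transition rates. -/
def IsIrreducibleRateMatrix {L : ℕ} (W : Matrix (Fin L) (Fin L) ℝ) : Prop :=
  ∀ n₀ n₁ : Fin L, n₀ ≠ n₁ → ∃ (l : ℕ) (m : Fin (l + 1) → Fin L),
    m 0 = n₀ ∧ m (Fin.last l) = n₁ ∧ ∀ i : Fin l, 0 < W (m i.succ) (m i.castSucc)

open Matrix Polynomial Finset

lemma rate_sum_rewrite {L : ℕ} {W : Matrix (Fin L) (Fin L) ℝ}
    (hW : IsTransitionRateMatrix W) (z : Fin L → ℝ) (n' : Fin L) :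
    ∑ n, z n * W n n' = ∑ n, (z n - z n') * W n n' := by
  simp_rw [sub_mul]
  rw [Finset.sum_sub_distrib, ← Finset.mul_sum, hW.2 n', mul_zero, sub_zero]

lemma rate_sum_nonpos {L : ℕ} {W : Matrix (Fin L) (Fin L) ℝ}
    (hW : IsTransitionRateMatrix W) {z : Fin L → ℝ} {n' : Fin L}
    (hmax : ∀ n, z n ≤ z n') : ∑ n, z n * W n n' ≤ 0 := by
  rw [rate_sum_rewrite hW z n']
  apply Finset.sum_nonpos
  intro n _
  by_cases h : n = n'
  · subst h; simp
  · exact mul_nonpos_of_nonpos_of_nonneg (sub_nonpos.2 (hmax n)) (hW.1 n n' h)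

lemma rate_eq_of_max {L : ℕ} {W : Matrix (Fin L) (Fin L) ℝ}
    (hW : IsTransitionRateMatrix W) {z : Fin L → ℝ} {n' : Fin L}
    (hmax : ∀ n, z n ≤ z n') (hsum : ∑ n, z n * W n n' = 0)
    {n : Fin L} (hpos : 0 < W n n') : z n = z n' := by
  rw [rate_sum_rewrite hW z n'] at hsum
  have hterm : ∀ i ∈ Finset.univ, (z i - z n') * W i n' ≤ 0 := by
    intro i _
    by_cases h : i = n'
    · subst h; simp
    · exact mul_nonpos_of_nonpos_of_nonneg (sub_nonpos.2 (hmax i)) (hW.1 i n' h)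
  have := (Finset.sum_eq_zero_iff_of_nonpos hterm).1 hsum n (Finset.mem_univ n)
  rcases mul_eq_zero.1 this with h | h
  · linarith [sub_eq_zero.1 h]
  · exact absurd h (ne_of_gt hpos)

lemma kernel_nonpos {L : ℕ} {W : Matrix (Fin L) (Fin L) ℝ}
    (hW : IsTransitionRateMatrix W) (hirr : IsIrreducibleRateMatrix W)
    {z : Fin L → ℝ} {n₀ : Fin L} (hz0 : z n₀ = 0)
    (hker : ∀ n', ∑ n, z n * W n n' = 0) (i : Fin L) : z i ≤ 0 := by
  obtain ⟨n', -, hmaxm⟩ := Finset.exists_max_image Finset.univ z ⟨n₀, Finset.mem_univ _⟩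
  have hmax : ∀ n, z n ≤ z n' := fun n => hmaxm n (Finset.mem_univ n)
  by_contra hi
  have hpos : 0 < z n' := lt_of_lt_of_le (not_le.1 hi) (hmax i)
  have hne : n' ≠ n₀ := by
    rintro rfl; rw [hz0] at hpos; exact lt_irrefl 0 hpos
  obtain ⟨l, m, hm0, hml, hedge⟩ := hirr n' n₀ hne
  have hall : ∀ j : Fin (l + 1), z (m j) = z n' := by
    intro j
    induction j using Fin.induction with
    | zero => rw [hm0]
    | succ k ih =>
      have hmaxk : ∀ n, z n ≤ z (m k.castSucc) := by rw [ih]; exact hmax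
      exact (rate_eq_of_max hW hmaxk (hker _) (hedge k)).trans ih
  have hlast := hall (Fin.last l)
  rw [hml, hz0] at hlast
  exact absurd hlast.symm (ne_of_gt hpos)

lemma detB_ne_zero {L : ℕ} (hL : 0 < L) {W : Matrix (Fin L) (Fin L) ℝ}
    (hW : IsTransitionRateMatrix W) (hirr : IsIrreducibleRateMatrix W) :
    (Matrix.updateRow (-W) (⟨0, hL⟩ : Fin L) (fun _ => (1 : ℝ))).det ≠ 0 := by
  set n₀ : Fin L := ⟨0, hL⟩ with hn₀
  set B : Matrix (Fin L) (Fin L) ℝ := Matrix.updateRow (-W) n₀ (fun _ => (1 : ℝ)) with hB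
  intro hdet
  obtain ⟨v, hv0, hv⟩ := Matrix.exists_vecMul_eq_zero_iff.2 hdet
  set z : Fin L → ℝ := fun i => if i = n₀ then 0 else v i with hz
  have hzn₀ : z n₀ = 0 := by simp [hz]
  have hkey : ∀ j, ∑ i, z i * W i j = v n₀ := by
    intro j
    have h0 : ∑ i, v i * B i j = 0 := by
      have := congrFun hv j
      rwa [Matrix.vecMul, dotProduct] at this
    have h2 : ∀ i, v i * B i j = (if i = n₀ then v n₀ else 0) - z i * W i j := by
      intro i
      by_cases h : i = n₀
      · subst h
        simp [hB, hz]
      · simp only [hB, Matrix.updateRow_ne h, Matrix.neg_apply, hz, if_neg h]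
        ring
    have h3 : ∑ i, v i * B i j = v n₀ - ∑ i, z i * W i j := by
      rw [Finset.sum_congr rfl fun i _ => h2 i, Finset.sum_sub_distrib]
      simp
    rw [h3] at h0
    linarith
  have hvn₀ : v n₀ = 0 := by
    obtain ⟨np, -, hmaxm⟩ := Finset.exists_max_image Finset.univ z ⟨n₀, Finset.mem_univ _⟩
    obtain ⟨nm, -, hminm⟩ := Finset.exists_min_image Finset.univ z ⟨n₀, Finset.mem_univ _⟩
    have hp : v n₀ ≤ 0 := by
      rw [← hkey np]
      exact rate_sum_nonpos hW fun n => hmaxm n (Finset.mem_univ n)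
    have hm : 0 ≤ v n₀ := by
      have hneg : ∑ i, (-z i) * W i nm ≤ 0 :=
        rate_sum_nonpos hW (z := fun i => -z i) fun n => neg_le_neg (hminm n (Finset.mem_univ n))
      have : ∑ i, (-z i) * W i nm = -(v n₀) := by
        simp_rw [neg_mul]
        rw [Finset.sum_neg_distrib, hkey nm]
      linarith
    linarith
  have hker : ∀ j, ∑ i, z i * W i j = 0 := fun j => by rw [hkey j, hvn₀]
  have hle : ∀ i, z i ≤ 0 := kernel_nonpos hW hirr hzn₀ hker
  have hge : ∀ i, -z i ≤ 0 := by
    apply kernel_nonpos hW hirr (n₀ := n₀) (by simp [hzn₀])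
    intro j
    simp_rw [neg_mul]
    rw [Finset.sum_neg_distrib, hker j, neg_zero]
  have hzzero : ∀ i, z i = 0 := fun i => le_antisymm (hle i) (by linarith [hge i])
  apply hv0
  funext i
  by_cases h : i = n₀
  · subst h; exact hvn₀
  · simpa [hz, h] using hzzero i

/-- For an irreducible transition rate matrix `W` on a finite state space,
`0` is an eigenvalue of `W` of algebraic multiplicity one, i.e. a simple root
of the characteristic polynomial of `W`. -/
theorem zero_simple_root_charpoly_of_irreducible_rate_matrix
    {L : ℕ} (hL : 0 < L) (W : Matrix (Fin L) (Fin L) ℝ)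
    (hW : IsTransitionRateMatrix W) (hirr : IsIrreducibleRateMatrix W) :
    (Matrix.charpoly W).rootMultiplicity 0 = 1 := by
  classical
  set n₀ : Fin L := ⟨0, hL⟩ with hn₀
  set A : Matrix (Fin L) (Fin L) ℝ[X] := Matrix.charmatrix W with hA
  have hrowsum : ∀ j, ∑ i, A i j = (X : ℝ[X]) := by
    intro j
    have hterm : ∀ i, A i j = (if i = j then (X : ℝ[X]) else 0) - C (W i j) := by
      intro i
      by_cases h : i = j
      · subst h; rw [hA, Matrix.charmatrix_apply_eq, if_pos rfl]
      · rw [hA, Matrix.charmatrix_apply_ne _ _ _ h, if_neg h, zero_sub]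
    rw [Finset.sum_congr rfl fun i _ => hterm i, Finset.sum_sub_distrib, ← map_sum, hW.2 j]
    simp
  set N : Matrix (Fin L) (Fin L) ℝ[X] := Matrix.updateRow A n₀ (fun _ => (1 : ℝ[X])) with hN
  have h1 : W.charpoly = (Matrix.updateRow A n₀ (∑ i, A i)).det := by
    have := Matrix.det_updateRow_sum A n₀ (fun _ => (1 : ℝ[X]))
    simp only [one_smul, one_mul] at this
    rw [Matrix.charpoly, ← this]
  have h2 : W.charpoly = X * N.det := by
    rw [h1]
    have hrow : (∑ i, A i) = (X : ℝ[X]) • (fun _ => (1 : ℝ[X])) := by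
      funext j
      refine (Finset.sum_apply j _ _).trans ?_
      simp [hrowsum j]
    rw [hrow, Matrix.det_updateRow_smul]
  have hmap : N.map (Polynomial.eval (0 : ℝ)) =
      Matrix.updateRow (-W) n₀ (fun _ => (1 : ℝ)) := by
    ext i j
    by_cases h : i = n₀
    · subst h
      simp [hN]
    · rw [Matrix.map_apply, hN, Matrix.updateRow_ne h, Matrix.updateRow_ne h]
      by_cases h2 : i = j
      · subst h2; rw [hA, Matrix.charmatrix_apply_eq]; simp
      · rw [hA, Matrix.charmatrix_apply_ne _ _ _ h2]; simp
  have h3 : N.det.eval 0 = (Matrix.updateRow (-W) n₀ (fun _ => (1 : ℝ))).det := by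
    have := RingHom.map_det (Polynomial.evalRingHom (0 : ℝ)) N
    rw [← coe_evalRingHom, this, RingHom.mapMatrix_apply, coe_evalRingHom, hmap]
  have hq0 : N.det.eval 0 ≠ 0 := by
    rw [h3]; exact detB_ne_zero hL hW hirr
  have hqne : N.det ≠ 0 := fun h => hq0 (by rw [h]; simp)
  have hq0' : ¬ (N.det).IsRoot 0 := hq0
  rw [h2, Polynomial.rootMultiplicity_mul (mul_ne_zero Polynomial.X_ne_zero hqne),
    Polynomial.rootMultiplicity_eq_zero hq0']
  have hX : Polynomial.rootMultiplicity (0 : ℝ) X = 1 := by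
    simpa using Polynomial.rootMultiplicity_X_sub_C_self (x := (0 : ℝ))
  rw [hX]
end

section
/- Let W be an irreducible transition rate matrix on the finite state space {1, …, L}. Then there exists a unique probability vector P^{ss} (P^{ss}_n ≥ 0, Σ_n P^{ss}_n = 1) with W P^{ss} = 0; moreover P^{ss}_n > 0 for every n, and for every probability vector P⁰ the solution P(t) = exp(tW) P⁰ of the master equation dP/dt = W P with P(0) = P⁰ satisfies lim_{t→∞} P(t) = P^{ss}. -/
open Filter

open Matrix

namespace NESS

variable {L : ℕ}






lemma hasSum_exp_entry (A : Matrix (Fin L) (Fin L) ℝ) (i j : Fin L) :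
    HasSum (fun k : ℕ => ((k.factorial : ℝ)⁻¹ • A ^ k) i j) (NormedSpace.exp A i j) := by
  letI : SeminormedRing (Matrix (Fin L) (Fin L) ℝ) := Matrix.linftyOpSemiNormedRing
  letI : NormedRing (Matrix (Fin L) (Fin L) ℝ) := Matrix.linftyOpNormedRing
  letI : NormedAlgebra ℝ (Matrix (Fin L) (Fin L) ℝ) := Matrix.linftyOpNormedAlgebra
  have h : HasSum (fun k : ℕ => (k.factorial : ℝ)⁻¹ • A ^ k) (NormedSpace.exp A) :=
    NormedSpace.exp_series_hasSum_exp' A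
  exact Pi.hasSum.mp (Pi.hasSum.mp h i) j

lemma pow_entry_nonneg {A : Matrix (Fin L) (Fin L) ℝ} (hA : ∀ i j, 0 ≤ A i j) :
    ∀ (k : ℕ) (i j : Fin L), 0 ≤ (A ^ k) i j := by
  intro k
  induction k with
  | zero => intro i j; rw [pow_zero]; by_cases h : i = j <;>
      simp [Matrix.one_apply, h, zero_le_one]
  | succ k ih =>
      intro i j
      rw [pow_succ, Matrix.mul_apply]
      exact Finset.sum_nonneg fun m _ => mul_nonneg (ih i m) (hA m j)

lemma exp_entry_nonneg {A : Matrix (Fin L) (Fin L) ℝ} (hA : ∀ i j, 0 ≤ A i j)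
    (i j : Fin L) : 0 ≤ NormedSpace.exp A i j :=
  hasSum_le (fun k => by
      have : (0:ℝ) ≤ (k.factorial : ℝ)⁻¹ * (A ^ k) i j :=
        mul_nonneg (by positivity) (pow_entry_nonneg hA k i j)
      simpa [Matrix.smul_apply] using this)
    hasSum_zero (hasSum_exp_entry A i j)

/-- column sums of powers (k ≥ 1) vanish for a rate matrix. -/
lemma colsum_pow {V : Matrix (Fin L) (Fin L) ℝ} (hV : ∀ j, ∑ i, V i j = 0) (k : ℕ)
    (j : Fin L) : ∑ i, (V ^ (k + 1)) i j = 0 := by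
  rw [pow_succ']
  simp only [Matrix.mul_apply]
  rw [Finset.sum_comm]
  refine Finset.sum_eq_zero fun m _ => ?_
  rw [← Finset.sum_mul, hV, zero_mul]

/-- column sums of `exp V` are 1 for a rate matrix. -/
lemma colsum_exp {V : Matrix (Fin L) (Fin L) ℝ} (hV : ∀ j, ∑ i, V i j = 0) (j : Fin L) :
    ∑ i, NormedSpace.exp V i j = 1 := by
  have hs : HasSum (fun k : ℕ => ∑ i, ((k.factorial : ℝ)⁻¹ • V ^ k) i j)
      (∑ i, NormedSpace.exp V i j) :=
    hasSum_sum fun i _ => hasSum_exp_entry V i j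
  have hterm : (fun k : ℕ => ∑ i, ((k.factorial : ℝ)⁻¹ • V ^ k) i j)
      = fun k : ℕ => if k = 0 then (1:ℝ) else 0 := by
    funext k
    cases k with
    | zero => simp [Matrix.one_apply, Finset.sum_ite_eq]
    | succ k =>
        simp only [Matrix.smul_apply, smul_eq_mul, ← Finset.mul_sum, colsum_pow hV k j,
          mul_zero]
        simp
  rw [hterm] at hs
  exact hs.unique (hasSum_ite_eq 0 1)

lemma sum_mulVec (A : Matrix (Fin L) (Fin L) ℝ) (x : Fin L → ℝ) :
    ∑ i, A.mulVec x i = ∑ j, (∑ i, A i j) * x j := by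
  simp only [Matrix.mulVec, dotProduct]
  rw [Finset.sum_comm]
  simp [Finset.sum_mul]

lemma sum_mulVec_of_colsum_one {A : Matrix (Fin L) (Fin L) ℝ}
    (h1 : ∀ j, ∑ i, A i j = 1) (x : Fin L → ℝ) :
    ∑ i, A.mulVec x i = ∑ j, x j := by
  rw [sum_mulVec]; simp [h1]



/-- `exp V ≥ 0` entrywise when `V` has nonnegative off-diagonal entries. -/
lemma exp_entry_nonneg_rate {V : Matrix (Fin L) (Fin L) ℝ}
    (hoff : ∀ i j, i ≠ j → 0 ≤ V i j) (i j : Fin L) :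
    0 ≤ NormedSpace.exp V i j := by
  set c : ℝ := ∑ n, |V n n| with hc
  set B : Matrix (Fin L) (Fin L) ℝ := V + Matrix.diagonal (fun _ => c) with hB
  have hBnn : ∀ a b, 0 ≤ B a b := by
    intro a b
    by_cases h : a = b
    · subst h
      have h1 : |V a a| ≤ ∑ n, |V n n| :=
        Finset.single_le_sum (f := fun n => |V n n|) (fun n _ => abs_nonneg _)
          (Finset.mem_univ a)
      have h2 := neg_abs_le (V a a)
      simp only [hB, Matrix.add_apply, Matrix.diagonal_apply_eq, hc]
      linarith
    · simpa [hB, Matrix.diagonal_apply_ne _ h] using hoff a b h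
  have hVeq : V = B + Matrix.diagonal (fun _ => -c) := by
    ext a b
    rcases eq_or_ne a b with h | h
    · subst h
      simp only [hB, Matrix.add_apply, Matrix.diagonal_apply_eq]
      ring
    · simp [hB, Matrix.diagonal_apply_ne _ h]
  have hcomm : Commute B (Matrix.diagonal (fun _ : Fin L => -c)) := by
    ext a b
    simp [Matrix.mul_diagonal, Matrix.diagonal_mul, mul_comm]
  have hexp : NormedSpace.exp V
      = NormedSpace.exp B * Matrix.diagonal (fun _ => Real.exp (-c)) := by
    rw [hVeq, Matrix.exp_add_of_commute B _ hcomm, Matrix.exp_diagonal]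
    congr 2
    rw [Pi.exp_def]
    funext _
    rw [Real.exp_eq_exp_ℝ]
  rw [hexp, Matrix.mul_diagonal]
  exact mul_nonneg (exp_entry_nonneg hBnn i j) (Real.exp_nonneg _)



lemma pow_entry_pos_of_path {A : Matrix (Fin L) (Fin L) ℝ} (hA : ∀ i j, 0 ≤ A i j) :
    ∀ (l : ℕ) (m : Fin (l+1) → Fin L),
      (∀ i : Fin l, 0 < A (m i.succ) (m i.castSucc)) →
      0 < (A ^ l) (m (Fin.last l)) (m 0) := by
  intro l
  induction l with
  | zero =>
      intro m _
      have h0 : Fin.last 0 = 0 := rfl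
      rw [h0, pow_zero]
      simp [Matrix.one_apply]
  | succ l ih =>
      intro m hm
      set m' : Fin (l+1) → Fin L := fun i => m i.castSucc with hm'
      have hstep' : ∀ i : Fin l, 0 < A (m' i.succ) (m' i.castSucc) := by
        intro i
        have := hm i.castSucc
        rw [Fin.succ_castSucc] at this
        exact this
      have hIH : 0 < (A ^ l) (m' (Fin.last l)) (m' 0) := ih m' hstep'
      have hlast : 0 < A (m (Fin.last l).succ) (m (Fin.last l).castSucc) := hm (Fin.last l)
      have hsucclast : (Fin.last l).succ = Fin.last (l+1) := rfl
      have h00 : m' 0 = m 0 := by simp [hm']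
      rw [pow_succ']
      rw [Matrix.mul_apply]
      have hterm : 0 < A (m (Fin.last (l+1))) (m' (Fin.last l)) * (A ^ l) (m' (Fin.last l)) (m 0) := by
        apply mul_pos
        · rw [← hsucclast]; exact hm (Fin.last l)
        · rw [← h00]; exact hIH
      calc (0:ℝ) < A (m (Fin.last (l+1))) (m' (Fin.last l)) * (A ^ l) (m' (Fin.last l)) (m 0) := hterm
        _ ≤ ∑ z, A (m (Fin.last (l+1))) z * (A ^ l) z (m 0) :=
          Finset.single_le_sum (f := fun z => A (m (Fin.last (l+1))) z * (A ^ l) z (m 0))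
            (fun z _ => mul_nonneg (hA _ _) (pow_entry_nonneg hA l _ _)) (Finset.mem_univ _)

/-- strict positivity of `exp W` entries for an irreducible rate matrix. -/
lemma exp_entry_pos {W : Matrix (Fin L) (Fin L) ℝ}
    (hoff : ∀ i j, i ≠ j → 0 ≤ W i j)
    (hirr : ∀ n₀ n₁ : Fin L, n₀ ≠ n₁ → ∃ (l : ℕ) (m : Fin (l + 1) → Fin L),
      m 0 = n₀ ∧ m (Fin.last l) = n₁ ∧ ∀ i : Fin l, 0 < W (m i.succ) (m i.castSucc))
    (i j : Fin L) : 0 < NormedSpace.exp W i j := by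
  set c : ℝ := 1 + ∑ n, |W n n| with hc
  set B : Matrix (Fin L) (Fin L) ℝ := W + Matrix.diagonal (fun _ => c) with hB
  have hBnn : ∀ a b, 0 ≤ B a b := by
    intro a b
    by_cases h : a = b
    · subst h
      have h1 : |W a a| ≤ ∑ n, |W n n| :=
        Finset.single_le_sum (f := fun n => |W n n|) (fun n _ => abs_nonneg _) (Finset.mem_univ a)
      have := neg_abs_le (W a a)
      simp only [hB, Matrix.add_apply, Matrix.diagonal_apply_eq, hc]
      linarith
    · simpa [hB, Matrix.diagonal_apply_ne _ h] using hoff a b h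
  -- strict positivity of some power entry of B
  have hpow : ∃ l : ℕ, 0 < (B ^ l) i j := by
    by_cases h : i = j
    · exact ⟨0, by simp [h, pow_zero, Matrix.one_apply]⟩
    · obtain ⟨l, m, hm0, hml, hmstep⟩ := hirr j i (fun hji => h hji.symm)
      refine ⟨l, ?_⟩
      have hstepB : ∀ k : Fin l, 0 < B (m k.succ) (m k.castSucc) := by
        intro k
        have hW := hmstep k
        by_cases hd : m k.succ = m k.castSucc
        · rw [hd] at hW ⊢
          have h1 : |W (m k.castSucc) (m k.castSucc)| ≤ ∑ n, |W n n| :=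
            Finset.single_le_sum (f := fun n => |W n n|) (fun n _ => abs_nonneg _)
              (Finset.mem_univ _)
          have h2 := neg_abs_le (W (m k.castSucc) (m k.castSucc))
          simp only [hB, Matrix.add_apply, Matrix.diagonal_apply_eq, hc]
          linarith
        · have : B (m k.succ) (m k.castSucc) = W (m k.succ) (m k.castSucc) := by
            simp [hB, Matrix.diagonal_apply_ne _ hd]
          rw [this]; exact hW
      have := pow_entry_pos_of_path hBnn l m hstepB
      rwa [hml, hm0] at this
  obtain ⟨l, hl⟩ := hpow
  -- exp B entry ≥ the l-th term > 0
  have hexpB : 0 < NormedSpace.exp B i j := by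
    have hterm : (0:ℝ) < ((l.factorial : ℝ)⁻¹ • B ^ l) i j := by
      have : (0:ℝ) < (l.factorial : ℝ)⁻¹ := by positivity
      simpa [Matrix.smul_apply, smul_eq_mul] using mul_pos this hl
    have hle : ((l.factorial : ℝ)⁻¹ • B ^ l) i j ≤ NormedSpace.exp B i j :=
      le_hasSum (hasSum_exp_entry B i j) l (fun k _ => by
        have : (0:ℝ) ≤ (k.factorial : ℝ)⁻¹ * (B ^ k) i j :=
          mul_nonneg (by positivity) (pow_entry_nonneg hBnn k i j)
        simpa [Matrix.smul_apply, smul_eq_mul] using this)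
    linarith
  -- transfer to exp W
  have hWeq : W = B + Matrix.diagonal (fun _ => -c) := by
    ext a b
    rcases eq_or_ne a b with h | h
    · subst h
      simp only [hB, Matrix.add_apply, Matrix.diagonal_apply_eq]
      ring
    · simp [hB, Matrix.diagonal_apply_ne _ h]
  have hcomm : Commute B (Matrix.diagonal (fun _ : Fin L => -c)) := by
    ext a b
    simp [Matrix.mul_diagonal, Matrix.diagonal_mul, mul_comm]
  have hexp : NormedSpace.exp W
      = NormedSpace.exp B * Matrix.diagonal (fun _ => Real.exp (-c)) := by
    rw [hWeq, Matrix.exp_add_of_commute B _ hcomm, Matrix.exp_diagonal]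
    congr 2
    rw [Pi.exp_def]
    funext _
    rw [Real.exp_eq_exp_ℝ]
  rw [hexp, Matrix.mul_diagonal]
  exact mul_pos hexpB (Real.exp_pos _)


lemma l1_nonexpansive {A : Matrix (Fin L) (Fin L) ℝ} (hpos : ∀ i j, 0 ≤ A i j)
    (h1 : ∀ j, ∑ i, A i j = 1) (x : Fin L → ℝ) :
    ∑ i, |A.mulVec x i| ≤ ∑ j, |x j| := by
  have hstep : ∀ i, |A.mulVec x i| ≤ ∑ j, A i j * |x j| := by
    intro i
    calc |A.mulVec x i| = |∑ j, A i j * x j| := by simp [Matrix.mulVec, dotProduct]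
      _ ≤ ∑ j, |A i j * x j| := Finset.abs_sum_le_sum_abs _ _
      _ = ∑ j, A i j * |x j| := by
          refine Finset.sum_congr rfl fun j _ => ?_
          rw [abs_mul, abs_of_nonneg (hpos i j)]
  calc ∑ i, |A.mulVec x i| ≤ ∑ i, ∑ j, A i j * |x j| := Finset.sum_le_sum fun i _ => hstep i
    _ = ∑ j, (∑ i, A i j) * |x j| := by rw [Finset.sum_comm]; simp [Finset.sum_mul]
    _ = ∑ j, |x j| := by simp [h1]

lemma l1_contract {A : Matrix (Fin L) (Fin L) ℝ} {δ : ℝ}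
    (hδ : ∀ i j, δ ≤ A i j) (h1 : ∀ j, ∑ i, A i j = 1)
    {x : Fin L → ℝ} (hx : ∑ j, x j = 0) :
    ∑ i, |A.mulVec x i| ≤ (1 - L * δ) * ∑ j, |x j| := by
  have hAx : ∀ i, A.mulVec x i = ∑ j, (A i j - δ) * x j := by
    intro i
    have : ∑ j, (A i j - δ) * x j = (∑ j, A i j * x j) - δ * ∑ j, x j := by
      rw [Finset.mul_sum, ← Finset.sum_sub_distrib]
      exact Finset.sum_congr rfl fun j _ => by ring
    rw [this, hx, mul_zero, sub_zero]
    simp [Matrix.mulVec, dotProduct]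
  have hstep : ∀ i, |A.mulVec x i| ≤ ∑ j, (A i j - δ) * |x j| := by
    intro i
    rw [hAx i]
    calc |∑ j, (A i j - δ) * x j| ≤ ∑ j, |(A i j - δ) * x j| := Finset.abs_sum_le_sum_abs _ _
      _ = ∑ j, (A i j - δ) * |x j| := by
          refine Finset.sum_congr rfl fun j _ => ?_
          rw [abs_mul, abs_of_nonneg (by linarith [hδ i j])]
  calc ∑ i, |A.mulVec x i| ≤ ∑ i, ∑ j, (A i j - δ) * |x j| :=
        Finset.sum_le_sum fun i _ => hstep i
    _ = ∑ j, (1 - L * δ) * |x j| := by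
        rw [Finset.sum_comm]
        refine Finset.sum_congr rfl fun j _ => ?_
        rw [← Finset.sum_mul, Finset.sum_sub_distrib, h1 j]
        simp [Finset.sum_const, Finset.card_univ, nsmul_eq_mul]
    _ = (1 - L * δ) * ∑ j, |x j| := by rw [Finset.mul_sum]



lemma exp_mulVec_eq_of_mulVec_eq_zero (V : Matrix (Fin L) (Fin L) ℝ) (Q : Fin L → ℝ)
    (hQ : V.mulVec Q = 0) : (NormedSpace.exp V).mulVec Q = Q := by
  funext n
  have h : ∀ j, HasSum (fun k : ℕ => ((k.factorial : ℝ)⁻¹ • V ^ k) n j * Q j)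
      (NormedSpace.exp V n j * Q j) := fun j => (hasSum_exp_entry V n j).mul_right _
  have hs : HasSum (fun k : ℕ => ∑ j, ((k.factorial : ℝ)⁻¹ • V ^ k) n j * Q j)
      (∑ j, NormedSpace.exp V n j * Q j) := hasSum_sum fun j _ => h j
  have hpk : ∀ k : ℕ, (V ^ (k+1)).mulVec Q = 0 := by
    intro k
    rw [pow_succ, ← Matrix.mulVec_mulVec, hQ, Matrix.mulVec_zero]
  have hterm : (fun k : ℕ => ∑ j, ((k.factorial : ℝ)⁻¹ • V ^ k) n j * Q j)
      = fun k : ℕ => if k = 0 then Q n else 0 := by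
    funext k
    cases k with
    | zero => simp [Matrix.one_apply]
    | succ k =>
        have h0 : ∑ j, (V ^ (k+1)) n j * Q j = 0 := by
          have := congrFun (hpk k) n
          simpa [Matrix.mulVec, dotProduct] using this
        simp only [Matrix.smul_apply, smul_eq_mul, mul_assoc, ← Finset.mul_sum, h0, mul_zero]
        simp
  rw [hterm] at hs
  have := hs.unique (hasSum_ite_eq 0 (Q n))
  simpa [Matrix.mulVec, dotProduct] using this

lemma mulVec_exp_deriv_zero (W : Matrix (Fin L) (Fin L) ℝ) (P : Fin L → ℝ)
    (hfix : ∀ t : ℝ, (NormedSpace.exp (t • W)).mulVec P = P) :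
    W.mulVec P = 0 := by
  letI : SeminormedRing (Matrix (Fin L) (Fin L) ℝ) := Matrix.linftyOpSemiNormedRing
  letI : NormedRing (Matrix (Fin L) (Fin L) ℝ) := Matrix.linftyOpNormedRing
  letI : NormedAlgebra ℝ (Matrix (Fin L) (Fin L) ℝ) := Matrix.linftyOpNormedAlgebra
  let Φlin : Matrix (Fin L) (Fin L) ℝ →ₗ[ℝ] (Fin L → ℝ) :=
    { toFun := fun A => A.mulVec P
      map_add' := fun A B => Matrix.add_mulVec A B P
      map_smul' := fun c A => Matrix.smul_mulVec c A P }
  let Φ : Matrix (Fin L) (Fin L) ℝ →L[ℝ] (Fin L → ℝ) := LinearMap.toContinuousLinearMap Φlin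
  have hd : HasDerivAt (fun u : ℝ => NormedSpace.exp (u • W))
      (NormedSpace.exp ((0:ℝ) • W) * W) 0 := hasDerivAt_exp_smul_const W 0
  have hd2 : HasDerivAt (fun u : ℝ => Φ (NormedSpace.exp (u • W)))
      (Φ (NormedSpace.exp ((0:ℝ) • W) * W)) 0 :=
    Φ.hasFDerivAt.comp_hasDerivAt 0 hd
  have hconst : (fun u : ℝ => Φ (NormedSpace.exp (u • W))) = fun _ => P := by
    funext u
    exact hfix u
  rw [hconst] at hd2
  have h0 := hd2.unique (hasDerivAt_const 0 P)
  have : Φ W = 0 := by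
    rw [← h0]
    congr 1
    rw [zero_smul, NormedSpace.exp_zero, one_mul]
  simpa [Φ, Φlin, LinearMap.coe_toContinuousLinearMap'] using this


end NESS

open NESS

/-- **Uniqueness and global attractivity of the nonequilibrium steady state.**
An irreducible transition rate matrix `W` has a unique stationary probability
vector `Pss` (`W Pss = 0`), which has strictly positive entries, and every
solution `P(t) = exp(tW) P⁰` of the master equation starting from a probability
vector `P⁰` converges to `Pss` as `t → ∞`. -/
theorem exists_unique_stationary_distribution_of_irreducible_rate_matrix
    {L : ℕ} (hL : 0 < L) (W : Matrix (Fin L) (Fin L) ℝ)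
    (hW : IsTransitionRateMatrix W) (hirr : IsIrreducibleRateMatrix W) :
    ∃ Pss : Fin L → ℝ,
      (∀ n, 0 < Pss n) ∧ (∑ n, Pss n = 1) ∧ W.mulVec Pss = 0 ∧
      (∀ Q : Fin L → ℝ, (∀ n, 0 ≤ Q n) → (∑ n, Q n = 1) → W.mulVec Q = 0 → Q = Pss) ∧
      (∀ P0 : Fin L → ℝ, (∀ n, 0 ≤ P0 n) → (∑ n, P0 n = 1) →
        Tendsto (fun t : ℝ => (NormedSpace.exp (t • W)).mulVec P0) atTop (nhds Pss)) := by
  obtain ⟨hoff, hcol⟩ := hW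
  set M : Matrix (Fin L) (Fin L) ℝ := NormedSpace.exp W with hMdef
  -- rate matrix structure of t • W for t ≥ 0
  have hoff_t : ∀ t : ℝ, 0 ≤ t → ∀ i j : Fin L, i ≠ j → 0 ≤ (t • W) i j := by
    intro t ht i j hij
    simpa [Matrix.smul_apply, smul_eq_mul] using mul_nonneg ht (hoff i j hij)
  have hcol_t : ∀ t : ℝ, ∀ j : Fin L, ∑ i, (t • W) i j = 0 := by
    intro t j
    simp [Matrix.smul_apply, smul_eq_mul, ← Finset.mul_sum, hcol j]
  have hexp_nonneg : ∀ t : ℝ, 0 ≤ t → ∀ i j : Fin L,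
      0 ≤ NormedSpace.exp (t • W) i j := fun t ht => exp_entry_nonneg_rate (hoff_t t ht)
  have hexp_colsum : ∀ t : ℝ, ∀ j : Fin L, ∑ i, NormedSpace.exp (t • W) i j = 1 :=
    fun t => colsum_exp (hcol_t t)
  have hMpos : ∀ i j : Fin L, 0 < M i j := exp_entry_pos hoff hirr
  have hM1 : ∀ j : Fin L, ∑ i, M i j = 1 := by
    have := hexp_colsum 1
    simpa [one_smul] using this
  have hMnn : ∀ i j : Fin L, 0 ≤ M i j := fun i j => (hMpos i j).le
  -- the minimal entry δ
  obtain ⟨q, -, hq⟩ := Finset.exists_min_image (Finset.univ : Finset (Fin L × Fin L))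
    (fun p => M p.1 p.2) ⟨(⟨0, hL⟩, ⟨0, hL⟩), Finset.mem_univ _⟩
  set δ : ℝ := M q.1 q.2 with hδdef
  have hδpos : 0 < δ := hMpos _ _
  have hδle : ∀ i j : Fin L, δ ≤ M i j := fun i j => hq (i, j) (Finset.mem_univ _)
  set c : ℝ := 1 - (L : ℝ) * δ with hcdef
  have hc1 : c < 1 := by
    have h9 : (0:ℝ) < (L : ℝ) * δ := mul_pos (by exact_mod_cast hL) hδpos
    rw [hcdef]
    linarith
  have hc0 : 0 ≤ c := by
    have h1 : ∑ i : Fin L, δ ≤ ∑ i : Fin L, M i ⟨0, hL⟩ :=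
      Finset.sum_le_sum fun i _ => hδle i _
    rw [hM1] at h1
    simp only [Finset.sum_const, Finset.card_univ, Fintype.card_fin, nsmul_eq_mul] at h1
    rw [hcdef]
    linarith
  -- uniqueness of fixed points of M among sum-one vectors
  have huniq : ∀ Q R : Fin L → ℝ, (∑ n, Q n = 1) → (∑ n, R n = 1) →
      M.mulVec Q = Q → M.mulVec R = R → Q = R := by
    intro Q R hQ hR hfQ hfR
    have hsum0 : ∑ n : Fin L, (Q n - R n) = 0 := by
      rw [Finset.sum_sub_distrib, hQ, hR, sub_self]
    have hfix : M.mulVec (fun n => Q n - R n) = fun n => Q n - R n := by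
      have : (fun n => Q n - R n) = Q - R := rfl
      rw [this, Matrix.mulVec_sub, hfQ, hfR]
    have hcon := l1_contract hδle hM1 hsum0
    rw [hfix] at hcon
    have hnn : 0 ≤ ∑ n : Fin L, |Q n - R n| := Finset.sum_nonneg fun n _ => abs_nonneg _
    have h0 : ∑ n : Fin L, |Q n - R n| = 0 := by nlinarith
    funext n
    have := (Finset.sum_eq_zero_iff_of_nonneg fun n _ => abs_nonneg (Q n - R n)).mp h0 n
      (Finset.mem_univ n)
    have := abs_eq_zero.mp this
    linarith
  -- existence of a fixed point of M
  have hdet : (M - 1).det = 0 := by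
    rw [← Matrix.det_transpose, ← Matrix.exists_mulVec_eq_zero_iff]
    refine ⟨fun _ => 1, ?_, ?_⟩
    · intro h
      have := congrFun h ⟨0, hL⟩
      simp at this
    · funext j
      have : ∑ i, (M i j - (1 : Matrix (Fin L) (Fin L) ℝ) i j) = 0 := by
        rw [Finset.sum_sub_distrib, hM1 j]
        simp [Matrix.one_apply]
      simpa [Matrix.mulVec, dotProduct, Matrix.transpose_apply, Matrix.sub_apply] using this
  obtain ⟨v, hv0, hvfix⟩ := Matrix.exists_mulVec_eq_zero_iff.mpr hdet
  have hMv : M.mulVec v = v := by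
    have := hvfix
    rw [Matrix.sub_mulVec, Matrix.one_mulVec, sub_eq_zero] at this
    exact this
  -- take absolute values
  set w : Fin L → ℝ := fun n => |v n| with hwdef
  have hw_ge : ∀ i, w i ≤ M.mulVec w i := by
    intro i
    have h1 : |M.mulVec v i| ≤ ∑ j, M i j * |v j| := by
      calc |M.mulVec v i| = |∑ j, M i j * v j| := by simp [Matrix.mulVec, dotProduct]
        _ ≤ ∑ j, |M i j * v j| := Finset.abs_sum_le_sum_abs _ _
        _ = ∑ j, M i j * |v j| := Finset.sum_congr rfl fun j _ => by
            rw [abs_mul, abs_of_nonneg (hMnn i j)]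
    have h2 : M.mulVec v i = v i := congrFun hMv i
    have h3 : M.mulVec w i = ∑ j, M i j * |v j| := by simp [Matrix.mulVec, dotProduct, hwdef]
    rw [h3]
    calc w i = |v i| := rfl
      _ = |M.mulVec v i| := by rw [h2]
      _ ≤ ∑ j, M i j * |v j| := h1
  have hw_sum : ∑ i, M.mulVec w i = ∑ i, w i := sum_mulVec_of_colsum_one hM1 w
  have hwfix : M.mulVec w = w := by
    have hz : ∑ i, (M.mulVec w i - w i) = 0 := by
      rw [Finset.sum_sub_distrib, hw_sum, sub_self]
    funext i
    have := (Finset.sum_eq_zero_iff_of_nonneg fun i _ => sub_nonneg.mpr (hw_ge i)).mp hz i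
      (Finset.mem_univ i)
    linarith
  have hwsum_pos : 0 < ∑ n, w n := by
    have hvne : ∃ n, v n ≠ 0 := by
      by_contra h
      push_neg at h
      exact hv0 (funext h)
    obtain ⟨n, hn⟩ := hvne
    have h1 : 0 < w n := abs_pos.mpr hn
    have h2 : w n ≤ ∑ m, w m :=
      Finset.single_le_sum (f := w) (fun m _ => abs_nonneg _) (Finset.mem_univ n)
    linarith
  set s : ℝ := ∑ n, w n with hsdef
  set Pss : Fin L → ℝ := fun n => s⁻¹ * w n with hPdef
  have hPsum : ∑ n, Pss n = 1 := by
    rw [hPdef, ← Finset.mul_sum, ← hsdef, inv_mul_cancel₀ (ne_of_gt hwsum_pos)]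
  have hPfix : M.mulVec Pss = Pss := by
    have : Pss = s⁻¹ • w := rfl
    rw [this, Matrix.mulVec_smul, hwfix]
  have hPnn : ∀ n, 0 ≤ Pss n := fun n =>
    mul_nonneg (inv_nonneg.mpr hwsum_pos.le) (abs_nonneg _)
  have hPpos : ∀ n, 0 < Pss n := by
    intro n
    obtain ⟨n₀, hn₀⟩ : ∃ n₀, 0 < Pss n₀ := by
      by_contra h
      push_neg at h
      have : ∑ n, Pss n ≤ 0 := Finset.sum_nonpos fun n _ => h n
      rw [hPsum] at this; linarith
    have : M n n₀ * Pss n₀ ≤ ∑ j, M n j * Pss j :=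
      Finset.single_le_sum (f := fun j => M n j * Pss j)
        (fun j _ => mul_nonneg (hMnn n j) (hPnn j)) (Finset.mem_univ n₀)
    have h2 : M.mulVec Pss n = ∑ j, M n j * Pss j := by simp [Matrix.mulVec, dotProduct]
    have h3 := congrFun hPfix n
    rw [h2] at h3
    have := mul_pos (hMpos n n₀) hn₀
    linarith
  -- semigroup law
  have hsemi : ∀ a b : ℝ, NormedSpace.exp ((a + b) • W)
      = NormedSpace.exp (a • W) * NormedSpace.exp (b • W) := by
    intro a b
    rw [add_smul]
    exact Matrix.exp_add_of_commute _ _ (((Commute.refl W).smul_left a).smul_right b)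
  -- exp(tW) fixes Pss
  have hfix_t : ∀ t : ℝ, 0 ≤ t → (NormedSpace.exp (t • W)).mulVec Pss = Pss := by
    intro t ht
    set Qt : Fin L → ℝ := (NormedSpace.exp (t • W)).mulVec Pss with hQtdef
    have hQtsum : ∑ n, Qt n = 1 := by
      rw [hQtdef, sum_mulVec_of_colsum_one (hexp_colsum t), hPsum]
    have hMQ : M.mulVec Qt = Qt := by
      have hcommMt : M * NormedSpace.exp (t • W) = NormedSpace.exp (t • W) * M := by
        have h1 : NormedSpace.exp ((1 + t) • W) = M * NormedSpace.exp (t • W) := by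
          rw [hsemi 1 t, one_smul]
        have h2 : NormedSpace.exp ((t + 1) • W) = NormedSpace.exp (t • W) * M := by
          rw [hsemi t 1, one_smul]
        rw [← h1, ← h2, add_comm]
      rw [hQtdef, Matrix.mulVec_mulVec, hcommMt, ← Matrix.mulVec_mulVec, hPfix]
    exact huniq Qt Pss hQtsum hPsum hMQ hPfix
  have hfix_all : ∀ t : ℝ, (NormedSpace.exp (t • W)).mulVec Pss = Pss := by
    intro t
    rcases le_or_gt 0 t with h | h
    · exact hfix_t t h
    · have h2 := hfix_t (-t) (by linarith)
      calc (NormedSpace.exp (t • W)).mulVec Pss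
          = (NormedSpace.exp (t • W)).mulVec ((NormedSpace.exp ((-t) • W)).mulVec Pss) := by
            rw [h2]
        _ = (NormedSpace.exp (t • W) * NormedSpace.exp ((-t) • W)).mulVec Pss :=
            Matrix.mulVec_mulVec _ _ _
        _ = (NormedSpace.exp ((t + -t) • W)).mulVec Pss := by rw [hsemi]
        _ = Pss := by
            rw [add_neg_cancel, zero_smul, NormedSpace.exp_zero, Matrix.one_mulVec]
  have hWP : W.mulVec Pss = 0 := mulVec_exp_deriv_zero W Pss hfix_all
  -- uniqueness among stationary probability vectors
  have huniqW : ∀ Q : Fin L → ℝ, (∀ n, 0 ≤ Q n) → (∑ n, Q n = 1) → W.mulVec Q = 0 →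
      Q = Pss := by
    intro Q _ hQsum hQW
    exact huniq Q Pss hQsum hPsum (exp_mulVec_eq_of_mulVec_eq_zero W Q hQW) hPfix
  -- power contraction
  have hpow_con : ∀ (k : ℕ) (y : Fin L → ℝ), (∑ j, y j = 0) →
      ∑ i, |(M ^ k).mulVec y i| ≤ c ^ k * ∑ j, |y j| := by
    intro k
    induction k with
    | zero => intro y _; simp [Matrix.one_mulVec]
    | succ k ih =>
        intro y hy
        have hMy_sum : ∑ i, M.mulVec y i = 0 := by
          rw [sum_mulVec_of_colsum_one hM1, hy]
        have h1 : (M ^ (k+1)).mulVec y = (M ^ k).mulVec (M.mulVec y) := by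
          rw [pow_succ, ← Matrix.mulVec_mulVec]
        rw [h1]
        calc ∑ i, |(M ^ k).mulVec (M.mulVec y) i| ≤ c ^ k * ∑ j, |M.mulVec y j| :=
              ih (M.mulVec y) hMy_sum
          _ ≤ c ^ k * ((1 - L * δ) * ∑ j, |y j|) := by
              have := l1_contract hδle hM1 hy
              exact mul_le_mul_of_nonneg_left this (pow_nonneg hc0 k)
          _ = c ^ (k+1) * ∑ j, |y j| := by rw [hcdef]; ring
  -- convergence
  refine ⟨Pss, hPpos, hPsum, hWP, huniqW, ?_⟩
  intro P0 hP0 hP0sum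
  set K : ℝ := ∑ n, |P0 n - Pss n| with hKdef
  have hKnn : 0 ≤ K := Finset.sum_nonneg fun n _ => abs_nonneg _
  have hbound : ∀ t : ℝ, 0 ≤ t → ∀ n : Fin L,
      |(NormedSpace.exp (t • W)).mulVec P0 n - Pss n| ≤ K * c ^ ⌊t⌋₊ := by
    intro t ht n
    set k : ℕ := ⌊t⌋₊ with hk
    set fr : ℝ := t - k with hfr
    have hfr0 : 0 ≤ fr := by
      simp only [hfr]
      have := Nat.floor_le ht
      linarith
    have hteq : t = (k : ℝ) + fr := by simp [hfr]
    have hsplit : NormedSpace.exp (t • W) = M ^ k * NormedSpace.exp (fr • W) := by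
      rw [hteq, hsemi, Nat.cast_smul_eq_nsmul, Matrix.exp_nsmul]
    have hdiffsum : ∑ j, (P0 j - Pss j) = 0 := by
      rw [Finset.sum_sub_distrib, hP0sum, hPsum, sub_self]
    set z : Fin L → ℝ := (NormedSpace.exp (fr • W)).mulVec (fun j => P0 j - Pss j)
      with hzdef
    have hzsum : ∑ j, z j = 0 := by
      rw [hzdef, sum_mulVec_of_colsum_one (hexp_colsum fr), hdiffsum]
    have hzK : ∑ j, |z j| ≤ K := by
      rw [hzdef, hKdef]
      exact l1_nonexpansive (hexp_nonneg fr hfr0) (hexp_colsum fr) _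
    have hdiff : (NormedSpace.exp (t • W)).mulVec P0 - Pss
        = (M ^ k).mulVec z := by
      have h1 : (fun j => P0 j - Pss j) = P0 - Pss := rfl
      rw [hzdef, h1, Matrix.mulVec_mulVec, ← hsplit, Matrix.mulVec_sub, hfix_all t]
    have hgoal : ∑ i, |((NormedSpace.exp (t • W)).mulVec P0 - Pss) i| ≤ c ^ k * K := by
      rw [hdiff]
      calc ∑ i, |(M ^ k).mulVec z i| ≤ c ^ k * ∑ j, |z j| := hpow_con k z hzsum
        _ ≤ c ^ k * K := mul_le_mul_of_nonneg_left hzK (pow_nonneg hc0 k)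
    have hsingle : |((NormedSpace.exp (t • W)).mulVec P0 - Pss) n|
        ≤ ∑ i, |((NormedSpace.exp (t • W)).mulVec P0 - Pss) i| :=
      Finset.single_le_sum (f := fun i => |((NormedSpace.exp (t • W)).mulVec P0 - Pss) i|)
        (fun i _ => abs_nonneg _) (Finset.mem_univ n)
    have : |((NormedSpace.exp (t • W)).mulVec P0 - Pss) n| ≤ c ^ k * K := le_trans hsingle hgoal
    simpa [Pi.sub_apply, mul_comm] using this
  have hKc : Tendsto (fun t : ℝ => K * c ^ ⌊t⌋₊) atTop (nhds 0) := by
    have h1 : Tendsto (fun k : ℕ => c ^ k) atTop (nhds 0) :=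
      tendsto_pow_atTop_nhds_zero_of_lt_one hc0 hc1
    have h2 : Tendsto (fun t : ℝ => c ^ ⌊t⌋₊) atTop (nhds 0) :=
      h1.comp tendsto_nat_floor_atTop
    simpa using h2.const_mul K
  rw [tendsto_pi_nhds]
  intro n
  have key : Tendsto (fun t : ℝ => (NormedSpace.exp (t • W)).mulVec P0 n - Pss n)
      atTop (nhds 0) := by
    refine squeeze_zero_norm' ?_ hKc
    filter_upwards [eventually_ge_atTop (0:ℝ)] with t ht
    simpa [Real.norm_eq_abs] using hbound t ht n
  have := key.add_const (Pss n)
  simpa using this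
end

section
/- Let W be a transition rate matrix on {1, …, L} with all off-diagonal entries strictly positive, and let P(t) be a differentiable solution of the master equation dP_n/dt = Σ_{n'} W_{n,n'} P_{n'} with P_n(t) > 0 for all n and all t in an open interval. Define the Shannon entropy S(t) = −Σ_n P_n(t) ln P_n(t). Then for all such t, dS/dt = (1/2) Σ_{n≠n'} (W_{n,n'}P_{n'} − W_{n',n}P_n) ln(W_{n',n}/W_{n,n'}) + (1/2) Σ_{n≠n'} (W_{n,n'}P_{n'} − W_{n',n}P_n) ln( W_{n,n'}P_{n'} / (W_{n',n}P_n) ); that is, the instantaneous rate of entropy change decomposes into the entropy exchange rate (first sum) plus the entropy production rate (second sum). -/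
/-- **Entropy balance for the master equation.**
Along a positive solution of the master equation `dPₙ/dt = Σₙ' W n n' Pₙ'`
(with all off-diagonal rates strictly positive), the Shannon entropy
`S(t) = −Σₙ Pₙ ln Pₙ` has derivative equal to the entropy exchange rate
`(1/2) Σ_{n≠n'} (W n n' P n' − W n' n P n) ln(W n' n / W n n')` plus the
entropy production rate
`(1/2) Σ_{n≠n'} (W n n' P n' − W n' n P n) ln(W n n' P n' / (W n' n P n))`. -/
theorem entropy_rate_decomposition_master_equation
    {L : ℕ} (W : Matrix (Fin L) (Fin L) ℝ)
    (hW : IsTransitionRateMatrix W)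
    (hpos : ∀ n n' : Fin L, n ≠ n' → 0 < W n n')
    (s : Set ℝ) (hs : IsOpen s)
    (P : ℝ → Fin L → ℝ)
    (hPpos : ∀ t ∈ s, ∀ n, 0 < P t n)
    (hPderiv : ∀ t ∈ s, ∀ n, HasDerivAt (fun u => P u n) (∑ n', W n n' * P t n') t) :
    ∀ t ∈ s,
      HasDerivAt (fun u => -∑ n, P u n * Real.log (P u n))
        ((1 / 2) * ∑ n, ∑ n', (if n = n' then 0 else
            (W n n' * P t n' - W n' n * P t n) * Real.log (W n' n / W n n'))
         + (1 / 2) * ∑ n, ∑ n', (if n = n' then 0 else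
            (W n n' * P t n' - W n' n * P t n)
              * Real.log (W n n' * P t n' / (W n' n * P t n)))) t := by
  obtain ⟨hWnn, hWcol⟩ := hW
  intro t ht
  have hppos : ∀ n, 0 < P t n := hPpos t ht
  set p : Fin L → ℝ := P t with hp
  set Q : Fin L → ℝ := fun n => ∑ n', W n n' * p n' with hQ
  -- derivative of the entropy
  have hderiv : HasDerivAt (fun u => -∑ n, P u n * Real.log (P u n))
      (-(∑ n, (Q n * Real.log (p n) + Q n))) t := by
    apply HasDerivAt.neg
    apply HasDerivAt.fun_sum
    intro n _
    have h := hPderiv t ht n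
    have hne : p n ≠ 0 := (hppos n).ne'
    have hlog : HasDerivAt (fun u => Real.log (P u n)) (Q n / p n) t := h.log hne
    have hmul := h.fun_mul hlog
    convert hmul using 1
    show Q n * Real.log (p n) + Q n = Q n * Real.log (p n) + p n * (Q n / p n)
    rw [mul_div_cancel₀ _ hne]
    rfl
  have hQsum : ∑ n, Q n = 0 := by
    have : ∑ n, Q n = ∑ n', ∑ n, W n n' * p n' := Finset.sum_comm
    rw [this]
    simp only [← Finset.sum_mul, hWcol, zero_mul, Finset.sum_const_zero]
  set f : Fin L → Fin L → ℝ :=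
    fun n n' => W n n' * p n' * (Real.log (p n') - Real.log (p n)) with hf
  -- combine the two logs termwise
  have hterm : ∀ n n' : Fin L,
      ((if n = n' then 0 else
          (W n n' * p n' - W n' n * p n) * Real.log (W n' n / W n n'))
        + (if n = n' then 0 else
          (W n n' * p n' - W n' n * p n)
            * Real.log (W n n' * p n' / (W n' n * p n))))
      = f n n' + f n' n := by
    intro n n'
    by_cases h : n = n'
    · subst h; simp [hf]
    · simp only [if_neg h, hf]
      have h1 : W n n' ≠ 0 := (hpos n n' h).ne'
      have h2 : W n' n ≠ 0 := (hpos n' n (Ne.symm h)).ne'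
      have h3 : p n ≠ 0 := (hppos n).ne'
      have h4 : p n' ≠ 0 := (hppos n').ne'
      rw [Real.log_div h2 h1, Real.log_div (mul_ne_zero h1 h4) (mul_ne_zero h2 h3),
          Real.log_mul h1 h4, Real.log_mul h2 h3]
      ring
  -- the double sum of f, swapped, equals the double sum of f
  have hswap : ∑ n, ∑ n', f n' n = ∑ n, ∑ n', f n n' := Finset.sum_comm
  -- value of the double sum of f
  have hfval : ∑ n, ∑ n', f n n' = -∑ n, Q n * Real.log (p n) := by
    have hsplit : ∀ n n' : Fin L,
        f n n' = W n n' * p n' * Real.log (p n') - W n n' * p n' * Real.log (p n) := by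
      intro n n'; simp only [hf]; ring
    simp only [hsplit, Finset.sum_sub_distrib]
    have h1 : ∑ n, ∑ n', W n n' * p n' * Real.log (p n') = 0 := by
      rw [Finset.sum_comm]
      simp only [← Finset.sum_mul, hWcol, zero_mul, Finset.sum_const_zero]
    have h2 : ∀ n : Fin L,
        ∑ n', W n n' * p n' * Real.log (p n) = Q n * Real.log (p n) := by
      intro n; rw [hQ]; simp only [← Finset.sum_mul]
    simp only [h1, h2, zero_sub]
  -- main algebraic identity
  have hmain :
      (1 / 2) * ∑ n, ∑ n', (if n = n' then 0 else
          (W n n' * p n' - W n' n * p n) * Real.log (W n' n / W n n'))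
       + (1 / 2) * ∑ n, ∑ n', (if n = n' then 0 else
          (W n n' * p n' - W n' n * p n)
            * Real.log (W n n' * p n' / (W n' n * p n)))
      = -(∑ n, (Q n * Real.log (p n) + Q n)) := by
    rw [← mul_add, ← Finset.sum_add_distrib]
    simp only [← Finset.sum_add_distrib, hterm]
    rw [Finset.sum_add_distrib]
    simp only [Finset.sum_add_distrib, hswap, hfval, Finset.sum_add_distrib]
    rw [hQsum]
    ring
  rw [show ((1 / 2) * ∑ n, ∑ n', (if n = n' then 0 else
          (W n n' * P t n' - W n' n * P t n) * Real.log (W n' n / W n n'))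
       + (1 / 2) * ∑ n, ∑ n', (if n = n' then 0 else
          (W n n' * P t n' - W n' n * P t n)
            * Real.log (W n n' * P t n' / (W n' n * P t n))))
      = -(∑ n, (Q n * Real.log (p n) + Q n)) from hmain]
  exact hderiv
end

section
/- Let W be a transition rate matrix on {1, …, L} with all off-diagonal entries strictly positive, let P^{ss} be a stationary probability vector (W P^{ss} = 0) with P^{ss}_n > 0 for all n, and let P be any probability vector with P_n > 0 for all n. Then the house-keeping energy input rate Ė_{hk} = (1/2) Σ_{n≠n'} (W_{n,n'}P_{n'} − W_{n',n}P_n) ln( W_{n,n'}P^{ss}_{n'} / (W_{n',n}P^{ss}_n) ) is nonnegative. -/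
lemma aux_log (a b c : ℝ) (ha : 0 < a) (hb : 0 < b) (hc : 0 ≤ c) :
    c - c * (b / a) ≤ c * Real.log (a / b) := by
  have h := Real.log_le_sub_one_of_pos (div_pos hb ha)
  have h2 : 1 - b / a ≤ Real.log (a / b) := by
    rw [Real.log_div hb.ne' ha.ne'] at h
    rw [Real.log_div ha.ne' hb.ne']
    linarith
  nlinarith [mul_le_mul_of_nonneg_left h2 hc]

lemma sum_ite_ne {L : ℕ} (n' : Fin L) (x : Fin L → ℝ) :
    ∑ n, (if n = n' then 0 else x n) = (∑ n, x n) - x n' := by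
  have h : ∀ n : Fin L, (if n = n' then 0 else x n)
      = x n - (if n = n' then x n else 0) := by
    intro n; split_ifs <;> ring
  rw [Finset.sum_congr rfl (fun n _ => h n), Finset.sum_sub_distrib,
    Finset.sum_ite_eq' Finset.univ n' x]
  simp

/-- **Nonnegativity of the house-keeping energy input rate.** -/
theorem housekeeping_rate_nonneg
    {L : ℕ} (W : Matrix (Fin L) (Fin L) ℝ)
    (hW : IsTransitionRateMatrix W)
    (hpos : ∀ n n' : Fin L, n ≠ n' → 0 < W n n')
    (Pss : Fin L → ℝ) (hPss : ∀ n, 0 < Pss n) (hPsssum : ∑ n, Pss n = 1)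
    (hstat : W.mulVec Pss = 0)
    (P : Fin L → ℝ) (hP : ∀ n, 0 < P n) (hPsum : ∑ n, P n = 1) :
    0 ≤ (1 / 2) * ∑ n, ∑ n', (if n = n' then 0 else
        (W n n' * P n' - W n' n * P n)
          * Real.log (W n n' * Pss n' / (W n' n * Pss n))) := by
  obtain ⟨hWnn, hWcol⟩ := hW
  set f : Fin L → Fin L → ℝ := fun n n' =>
    W n n' * P n' * Real.log (W n n' * Pss n' / (W n' n * Pss n)) with hf
  -- Step 1: the double sum equals twice the "one-sided" sum.
  have hS : ∑ n, ∑ n', (if n = n' then 0 else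
        (W n n' * P n' - W n' n * P n)
          * Real.log (W n n' * Pss n' / (W n' n * Pss n)))
      = 2 * ∑ n, ∑ n', (if n = n' then 0 else f n n') := by
    have h1 : ∀ n n' : Fin L, (if n = n' then 0 else
        (W n n' * P n' - W n' n * P n)
          * Real.log (W n n' * Pss n' / (W n' n * Pss n)))
        = (if n = n' then 0 else f n n') + (if n = n' then 0 else f n' n) := by
      intro n n'
      split_ifs with h
      · ring
      · have hx : (0:ℝ) < W n n' * Pss n' := mul_pos (hpos n n' h) (hPss n')
        have hy : (0:ℝ) < W n' n * Pss n := mul_pos (hpos n' n (Ne.symm h)) (hPss n)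
        simp only [hf]
        rw [Real.log_div hx.ne' hy.ne', Real.log_div hy.ne' hx.ne']
        ring
    have h2 : ∑ n, ∑ n', (if n = n' then 0 else f n' n)
        = ∑ n, ∑ n', (if n = n' then 0 else f n n') := by
      rw [Finset.sum_comm]
      refine Finset.sum_congr rfl fun n _ => Finset.sum_congr rfl fun n' _ => ?_
      simp [eq_comm]
    calc ∑ n, ∑ n', (if n = n' then 0 else
        (W n n' * P n' - W n' n * P n)
          * Real.log (W n n' * Pss n' / (W n' n * Pss n)))
        = ∑ n, ∑ n', ((if n = n' then 0 else f n n')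
            + (if n = n' then 0 else f n' n)) := by
          exact Finset.sum_congr rfl fun n _ => Finset.sum_congr rfl fun n' _ => h1 n n'
      _ = (∑ n, ∑ n', (if n = n' then 0 else f n n'))
            + ∑ n, ∑ n', (if n = n' then 0 else f n' n) := by
          simp [Finset.sum_add_distrib]
      _ = 2 * ∑ n, ∑ n', (if n = n' then 0 else f n n') := by rw [h2]; ring
  rw [hS]
  -- Step 2: the one-sided sum is nonnegative.
  have hT : 0 ≤ ∑ n, ∑ n', (if n = n' then 0 else f n n') := by
    -- lower bound function
    set g : Fin L → Fin L → ℝ := fun n n' =>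
      W n n' * P n' - W n' n * Pss n * (P n' / Pss n') with hg
    have hlow : ∀ n n' : Fin L,
        (if n = n' then 0 else g n n') ≤ (if n = n' then 0 else f n n') := by
      intro n n'
      split_ifs with h
      · exact le_refl 0
      · have hWp : 0 < W n n' := hpos n n' h
        have hWp' : 0 < W n' n := hpos n' n (Ne.symm h)
        have hx : (0:ℝ) < W n n' * Pss n' := mul_pos hWp (hPss n')
        have hy : (0:ℝ) < W n' n * Pss n := mul_pos hWp' (hPss n)
        have hc : (0:ℝ) ≤ W n n' * P n' := (mul_pos hWp (hP n')).le
        have := aux_log (W n n' * Pss n') (W n' n * Pss n) (W n n' * P n') hx hy hc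
        have heq : g n n' = W n n' * P n'
            - W n n' * P n' * (W n' n * Pss n / (W n n' * Pss n')) := by
          have h1 : Pss n' ≠ 0 := (hPss n').ne'
          have h2 : W n n' ≠ 0 := hWp.ne'
          simp only [hg]
          field_simp
        simpa [hf, heq] using this
    have hgsum : ∑ n, ∑ n', (if n = n' then 0 else g n n') = 0 := by
      rw [Finset.sum_comm]
      have inner : ∀ n' : Fin L, ∑ n, (if n = n' then 0 else g n n') = 0 := by
        intro n'
        rw [sum_ite_ne n' (fun n => g n n')]
        have hA : ∑ n, W n n' * P n' = 0 := by
          rw [← Finset.sum_mul, hWcol n', zero_mul]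
        have hB : ∑ n, W n' n * Pss n * (P n' / Pss n') = 0 := by
          rw [← Finset.sum_mul]
          have h0 : W.mulVec Pss n' = 0 := congrFun hstat n'
          simp only [Matrix.mulVec, dotProduct] at h0
          rw [h0, zero_mul]
        have hAB : ∑ n, g n n' = 0 := by
          simp only [hg]
          rw [Finset.sum_sub_distrib, hA, hB, sub_zero]
        rw [hAB]
        have hne : Pss n' ≠ 0 := (hPss n').ne'
        simp only [hg]
        field_simp
        ring
      rw [Finset.sum_congr rfl (fun n' _ => inner n'), Finset.sum_const, smul_zero]
    calc (0:ℝ) = ∑ n, ∑ n', (if n = n' then 0 else g n n') := hgsum.symm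
      _ ≤ ∑ n, ∑ n', (if n = n' then 0 else f n n') :=
          Finset.sum_le_sum fun n _ => Finset.sum_le_sum fun n' _ => hlow n n'
  linarith
end

section
/- Let W be an irreducible transition rate matrix on {1, …, L} and let P^{ss} be its (unique) stationary probability vector, which has all entries positive. Then the condition of detailed balance, W_{n,n'} P^{ss}_{n'} = W_{n',n} P^{ss}_n for all n, n', holds if and only if W satisfies the Kolmogorov cycle condition: for every k ≥ 1 and every sequence of distinct states n₀, n₁, …, n_k, one has W_{n₀,n₁} W_{n₁,n₂} ⋯ W_{n_{k−1},n_k} W_{n_k,n₀} = W_{n₀,n_k} W_{n_k,n_{k−1}} ⋯ W_{n₂,n₁} W_{n₁,n₀}. -/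
/-- From any positive-current edge, extract a simple cycle all of whose edges
carry positive current. -/
lemma exists_pos_cycle {L : ℕ} (J : Fin L → Fin L → ℝ)
    (hanti : ∀ n n', J n n' = - J n' n)
    (hsum : ∀ n', ∑ n, J n n' = 0)
    {a b : Fin L} (hab : 0 < J b a) :
    ∃ (k : ℕ), 1 ≤ k ∧ ∃ m : Fin (k+1) → Fin L, Function.Injective m ∧
      (∀ i : Fin k, 0 < J (m i.succ) (m i.castSucc)) ∧ 0 < J (m 0) (m (Fin.last k)) := by
  have hJself : ∀ x : Fin L, J x x = 0 := by
    intro x; have := hanti x x; linarith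
  have step : ∀ x y : Fin L, 0 < J y x → ∃ z, 0 < J z y := by
    intro x y hxy
    by_contra h
    push_neg at h
    have hx : J x y < 0 := by rw [hanti]; linarith
    have hlt : ∑ n, J n y < ∑ _n : Fin L, (0 : ℝ) :=
      Finset.sum_lt_sum (fun i _ => h i) ⟨x, Finset.mem_univ x, by simpa using hx⟩
    rw [hsum y, Finset.sum_const, smul_zero] at hlt
    exact lt_irrefl _ hlt
  -- Build an infinite sequence along positive-current edges.
  set T := {q : Fin L × Fin L // 0 < J q.2 q.1} with hT
  let next : T → T := fun t =>
    ⟨(t.1.2, Classical.choose (step t.1.1 t.1.2 t.2)),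
      Classical.choose_spec (step t.1.1 t.1.2 t.2)⟩
  let F : ℕ → T := fun n => next^[n] ⟨(a, b), hab⟩
  let p : ℕ → Fin L := fun n => (F n).1.1
  have hFs : ∀ n, F (n+1) = next (F n) := fun n => Function.iterate_succ_apply' next n _
  have hnext1 : ∀ t : T, (next t).1.1 = t.1.2 := fun t => rfl
  have hp : ∀ n, 0 < J (p (n+1)) (p n) := by
    intro n
    have h1 : p (n+1) = (F n).1.2 := by
      show (F (n+1)).1.1 = (F n).1.2
      rw [hFs n, hnext1]
    rw [h1]; exact (F n).2
  -- pigeonhole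
  have hrep : ∃ i j : ℕ, i < j ∧ p (i + (j - i)) = p i := by
    obtain ⟨x, y, hxy, hpxy⟩ := Finite.exists_ne_map_eq_of_infinite p
    rcases lt_or_gt_of_ne hxy with h | h
    · exact ⟨x, y, h, by rw [Nat.add_sub_cancel' h.le, hpxy]⟩
    · exact ⟨y, x, h, by rw [Nat.add_sub_cancel' h.le, hpxy]⟩
  have hQ : ∃ d, 0 < d ∧ ∃ i, p (i + d) = p i := by
    obtain ⟨i, j, hij, hp'⟩ := hrep
    exact ⟨j - i, by omega, i, hp'⟩
  classical
  set d0 := Nat.find hQ with hd0def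
  obtain ⟨hd0pos, i0, hi0⟩ := Nat.find_spec hQ
  rw [← hd0def] at hi0 hd0pos
  have hmin : ∀ d, d < d0 → ¬(0 < d ∧ ∃ i, p (i + d) = p i) := fun d hd => Nat.find_min hQ hd
  have hd0two : 2 ≤ d0 := by
    by_contra h
    have h1 : d0 = 1 := by omega
    rw [h1] at hi0
    have hcon := hp i0
    rw [hi0, hJself] at hcon
    exact lt_irrefl _ hcon
  obtain ⟨k, hk⟩ : ∃ k, d0 = k + 1 := ⟨d0 - 1, by omega⟩
  have hk1 : 1 ≤ k := by omega
  refine ⟨k, hk1, fun t => p (i0 + t.val), ?_, ?_, ?_⟩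
  · -- injectivity
    intro s t hst
    have hst' : p (i0 + s.val) = p (i0 + t.val) := hst
    by_contra hne
    have hne' : s.val ≠ t.val := fun h => hne (Fin.ext h)
    -- wlog s < t
    rcases Nat.lt_or_ge s.val t.val with h | h
    · have : 0 < t.val - s.val ∧ ∃ i, p (i + (t.val - s.val)) = p i := by
        refine ⟨by omega, i0 + s.val, ?_⟩
        have : i0 + s.val + (t.val - s.val) = i0 + t.val := by omega
        rw [this, ← hst']
      exact hmin _ (by have := t.isLt; omega) this
    · have hlt : t.val < s.val := by omega
      have : 0 < s.val - t.val ∧ ∃ i, p (i + (s.val - t.val)) = p i := by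
        refine ⟨by omega, i0 + t.val, ?_⟩
        have : i0 + t.val + (s.val - t.val) = i0 + s.val := by omega
        rw [this, hst']
      exact hmin _ (by have := s.isLt; omega) this
  · -- edges
    intro i
    have h1 : (i.succ : Fin (k+1)).val = i.val + 1 := rfl
    have h2 : (i.castSucc : Fin (k+1)).val = i.val := rfl
    simp only [h1, h2]
    have : i0 + (i.val + 1) = (i0 + i.val) + 1 := by omega
    rw [this]
    exact hp _
  · -- wrap edge
    have h0 : ((0 : Fin (k+1)) : ℕ) = 0 := rfl
    have hl : ((Fin.last k : Fin (k+1)) : ℕ) = k := rfl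
    simp only [h0, hl, Nat.add_zero]
    have e1 : p i0 = p ((i0 + k) + 1) := by
      rw [← hi0]; congr 1; omega
    rw [e1]
    exact hp _


/-- **Detailed balance ↔ Kolmogorov cycle condition.**
For an irreducible transition rate matrix `W` with stationary probability
vector `Pss` (all entries positive), the stationary distribution satisfies
detailed balance `W n n' · Pss n' = W n' n · Pss n` for all `n, n'` if and only
if for every `k ≥ 1` and every sequence of distinct states `n₀, n₁, …, n_k`,
`W_{n₀,n₁} W_{n₁,n₂} ⋯ W_{n_{k−1},n_k} W_{n_k,n₀}
  = W_{n₀,n_k} W_{n_k,n_{k−1}} ⋯ W_{n₂,n₁} W_{n₁,n₀}`. -/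
theorem detailed_balance_iff_kolmogorov_cycle_condition
    {L : ℕ} (W : Matrix (Fin L) (Fin L) ℝ)
    (hW : IsTransitionRateMatrix W) (hirr : IsIrreducibleRateMatrix W)
    (Pss : Fin L → ℝ) (hPss : ∀ n, 0 < Pss n) (hPsssum : ∑ n, Pss n = 1)
    (hstat : W.mulVec Pss = 0) :
    (∀ n n' : Fin L, W n n' * Pss n' = W n' n * Pss n)
    ↔ (∀ (k : ℕ), 1 ≤ k → ∀ m : Fin (k + 1) → Fin L, Function.Injective m →
        (∏ i : Fin k, W (m i.castSucc) (m i.succ)) * W (m (Fin.last k)) (m 0)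
          = (∏ i : Fin k, W (m i.succ) (m i.castSucc)) * W (m 0) (m (Fin.last k))) := by
  constructor
  · -- detailed balance → Kolmogorov
    intro hdb k _hk m _hm
    set P : ℝ := ∏ s : Fin (k+1), Pss (m s) with hPdef
    have hPpos : 0 < P := Finset.prod_pos (fun s _ => hPss (m s))
    have e1 : (∏ i : Fin k, W (m i.castSucc) (m i.succ)) * (∏ i : Fin k, Pss (m i.succ))
        = (∏ i : Fin k, W (m i.succ) (m i.castSucc)) * (∏ i : Fin k, Pss (m i.castSucc)) := by
      rw [← Finset.prod_mul_distrib, ← Finset.prod_mul_distrib]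
      exact Finset.prod_congr rfl (fun i _ => hdb _ _)
    have e2 : W (m (Fin.last k)) (m 0) * Pss (m 0)
        = W (m 0) (m (Fin.last k)) * Pss (m (Fin.last k)) := hdb _ _
    have hP1 : P = Pss (m 0) * ∏ i : Fin k, Pss (m i.succ) :=
      Fin.prod_univ_succ (fun s => Pss (m s))
    have hP2 : P = (∏ i : Fin k, Pss (m i.castSucc)) * Pss (m (Fin.last k)) :=
      Fin.prod_univ_castSucc (fun s => Pss (m s))
    have key : ((∏ i : Fin k, W (m i.castSucc) (m i.succ)) * W (m (Fin.last k)) (m 0)) * P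
        = ((∏ i : Fin k, W (m i.succ) (m i.castSucc)) * W (m 0) (m (Fin.last k))) * P := by
      calc ((∏ i : Fin k, W (m i.castSucc) (m i.succ)) * W (m (Fin.last k)) (m 0)) * P
          = ((∏ i : Fin k, W (m i.castSucc) (m i.succ)) * (∏ i : Fin k, Pss (m i.succ)))
            * (W (m (Fin.last k)) (m 0) * Pss (m 0)) := by rw [hP1]; ring
        _ = ((∏ i : Fin k, W (m i.succ) (m i.castSucc)) * (∏ i : Fin k, Pss (m i.castSucc)))
            * (W (m 0) (m (Fin.last k)) * Pss (m (Fin.last k))) := by rw [e1, e2]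
        _ = ((∏ i : Fin k, W (m i.succ) (m i.castSucc)) * W (m 0) (m (Fin.last k))) * P := by
            rw [hP2]; ring
    exact mul_right_cancel₀ (ne_of_gt hPpos) key
  · -- Kolmogorov → detailed balance
    intro hK n n'
    by_contra hdb
    set J : Fin L → Fin L → ℝ := fun x y => W x y * Pss y - W y x * Pss x with hJdef
    have hanti : ∀ x y, J x y = - J y x := by intro x y; simp only [hJdef]; ring
    have hsum : ∀ y, ∑ x, J x y = 0 := by
      intro y
      have h1 : ∑ x, W x y * Pss y = 0 := by
        rw [← Finset.sum_mul, hW.2 y, zero_mul]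
      have h2 : ∑ x, W y x * Pss x = 0 := by
        have := congrFun hstat y
        simpa [Matrix.mulVec, dotProduct] using this
      simp only [hJdef, Finset.sum_sub_distrib, h1, h2, sub_zero]
    obtain ⟨a, b, hab⟩ : ∃ a b, 0 < J b a := by
      rcases lt_trichotomy (J n n') 0 with h | h | h
      · exact ⟨n, n', by rw [hanti] at h; linarith⟩
      · exact absurd (by simpa [hJdef, sub_eq_zero] using h) hdb
      · exact ⟨n', n, h⟩
    obtain ⟨k, hk1, m, hm, hedges, hwrap⟩ := exists_pos_cycle J hanti hsum hab
    -- sign facts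
    have hWnn : ∀ i : Fin k, 0 ≤ W (m i.castSucc) (m i.succ) := by
      intro i
      refine hW.1 _ _ (fun h => ?_)
      have := hm h
      exact absurd this (ne_of_lt (Fin.castSucc_lt_succ (i := i)))
    have hWwrapnn : 0 ≤ W (m (Fin.last k)) (m 0) := by
      refine hW.1 _ _ (fun h => ?_)
      have h2 : (Fin.last k) = (0 : Fin (k+1)) := hm h
      have h3 : k = 0 := by simpa using congrArg Fin.val h2
      omega
    -- per-edge strict inequalities
    have hA : ∀ i : Fin k, W (m i.castSucc) (m i.succ) * Pss (m i.succ)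
        < W (m i.succ) (m i.castSucc) * Pss (m i.castSucc) := by
      intro i
      have := hedges i
      simp only [hJdef] at this
      linarith
    have hA' : W (m (Fin.last k)) (m 0) * Pss (m 0)
        < W (m 0) (m (Fin.last k)) * Pss (m (Fin.last k)) := by
      have := hwrap
      simp only [hJdef] at this
      linarith
    have hAnn : ∀ i : Fin k, 0 ≤ W (m i.castSucc) (m i.succ) * Pss (m i.succ) :=
      fun i => mul_nonneg (hWnn i) (hPss _).le
    have hBpos : ∀ i : Fin k, 0 < W (m i.succ) (m i.castSucc) * Pss (m i.castSucc) :=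
      fun i => lt_of_le_of_lt (hAnn i) (hA i)
    -- product inequality
    have hXY : (∏ i : Fin k, W (m i.castSucc) (m i.succ) * Pss (m i.succ))
        ≤ ∏ i : Fin k, W (m i.succ) (m i.castSucc) * Pss (m i.castSucc) :=
      Finset.prod_le_prod (fun i _ => hAnn i) (fun i _ => (hA i).le)
    have hYpos : 0 < ∏ i : Fin k, W (m i.succ) (m i.castSucc) * Pss (m i.castSucc) :=
      Finset.prod_pos (fun i _ => hBpos i)
    have hstrict : (∏ i : Fin k, W (m i.castSucc) (m i.succ) * Pss (m i.succ))
          * (W (m (Fin.last k)) (m 0) * Pss (m 0))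
        < (∏ i : Fin k, W (m i.succ) (m i.castSucc) * Pss (m i.castSucc))
          * (W (m 0) (m (Fin.last k)) * Pss (m (Fin.last k))) := by
      calc (∏ i : Fin k, W (m i.castSucc) (m i.succ) * Pss (m i.succ))
            * (W (m (Fin.last k)) (m 0) * Pss (m 0))
          ≤ (∏ i : Fin k, W (m i.succ) (m i.castSucc) * Pss (m i.castSucc))
            * (W (m (Fin.last k)) (m 0) * Pss (m 0)) :=
            mul_le_mul_of_nonneg_right hXY (mul_nonneg hWwrapnn (hPss _).le)
        _ < _ := (mul_lt_mul_iff_right₀ hYpos).mpr hA'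
    -- but Kolmogorov forces equality
    set P : ℝ := ∏ s : Fin (k+1), Pss (m s) with hPdef
    have hP1 : P = Pss (m 0) * ∏ i : Fin k, Pss (m i.succ) :=
      Fin.prod_univ_succ (fun s => Pss (m s))
    have hP2 : P = (∏ i : Fin k, Pss (m i.castSucc)) * Pss (m (Fin.last k)) :=
      Fin.prod_univ_castSucc (fun s => Pss (m s))
    have hKol := hK k hk1 m hm
    have heq : (∏ i : Fin k, W (m i.castSucc) (m i.succ) * Pss (m i.succ))
          * (W (m (Fin.last k)) (m 0) * Pss (m 0))
        = (∏ i : Fin k, W (m i.succ) (m i.castSucc) * Pss (m i.castSucc))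
          * (W (m 0) (m (Fin.last k)) * Pss (m (Fin.last k))) := by
      calc (∏ i : Fin k, W (m i.castSucc) (m i.succ) * Pss (m i.succ))
            * (W (m (Fin.last k)) (m 0) * Pss (m 0))
          = ((∏ i : Fin k, W (m i.castSucc) (m i.succ)) * W (m (Fin.last k)) (m 0)) * P := by
            rw [Finset.prod_mul_distrib, hP1]; ring
        _ = ((∏ i : Fin k, W (m i.succ) (m i.castSucc)) * W (m 0) (m (Fin.last k))) * P := by
            rw [hKol]
        _ = _ := by rw [Finset.prod_mul_distrib, hP2]; ring
    exact absurd heq (ne_of_lt hstrict)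
end

section
/- Consider a mass-action chemical reaction network with N species, M reversible reactions, rate constants k_i^± > 0, and standard chemical potentials μ_j^0 ∈ ℝ satisfying the compatibility relation ln(k_i^+/k_i^-) = Σ_{j=1}^N (ν⁺_{ij} − ν⁻_{ij}) μ_j^0 for every i. Define the Gibbs free energy G(c) = Σ_{j=1}^N (μ_j^0 + ln c_j) c_j − Σ_{j=1}^N c_j + G^0 for c in the open positive orthant, where G^0 is a constant. Then along any differentiable solution c(t) of the chemical rate equations taking values in the open positive orthant, dG(c(t))/dt = −Σ_{i=1}^M (R_i^+(c(t)) − R_i^-(c(t))) ln( R_i^+(c(t)) / R_i^-(c(t)) ) ≤ 0; that is, the Gibbs free energy is monotonically non-increasing in time. -/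
/-- **Monotone decrease of the Gibbs free energy for mass-action kinetics.**
Consider a mass-action reaction network with stoichiometric coefficients
`νp i j, νm i j`, rate constants `kp i, km i > 0` and standard chemical
potentials `μ0 j` satisfying `ln(kp i / km i) = Σ_j (νp i j − νm i j) μ0 j`.
Along any positive solution `c(t)` of the rate equations
`dc_j/dt = Σ_i (νm i j − νp i j) (R⁺_i(c) − R⁻_i(c))`, where
`R⁺_i(c) = kp i ∏_l c_l^{νp i l}` and `R⁻_i(c) = km i ∏_l c_l^{νm i l}`,
the Gibbs free energy `G(c) = Σ_j (μ0 j + ln c_j) c_j − Σ_j c_j + G0`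
satisfies `dG/dt = −Σ_i (R⁺_i − R⁻_i) ln(R⁺_i / R⁻_i) ≤ 0`. -/
theorem gibbs_free_energy_decreases_mass_action
    {N M : ℕ} (νp νm : Fin M → Fin N → ℕ) (kp km : Fin M → ℝ)
    (hkp : ∀ i, 0 < kp i) (hkm : ∀ i, 0 < km i)
    (μ0 : Fin N → ℝ) (G0 : ℝ)
    (hcompat : ∀ i, Real.log (kp i / km i)
      = ∑ j, ((νp i j : ℝ) - (νm i j : ℝ)) * μ0 j)
    (c : ℝ → Fin N → ℝ) (hcpos : ∀ t j, 0 < c t j)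
    (hcderiv : ∀ t j, HasDerivAt (fun u => c u j)
      (∑ i, ((νm i j : ℝ) - (νp i j : ℝ)) *
        (kp i * ∏ l, c t l ^ νp i l - km i * ∏ l, c t l ^ νm i l)) t)
    (t : ℝ) :
    HasDerivAt (fun u => ∑ j, (μ0 j + Real.log (c u j)) * c u j - ∑ j, c u j + G0)
      (-∑ i, (kp i * ∏ l, c t l ^ νp i l - km i * ∏ l, c t l ^ νm i l) *
        Real.log ((kp i * ∏ l, c t l ^ νp i l) / (km i * ∏ l, c t l ^ νm i l))) t
    ∧ (-∑ i, (kp i * ∏ l, c t l ^ νp i l - km i * ∏ l, c t l ^ νm i l) *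
        Real.log ((kp i * ∏ l, c t l ^ νp i l) / (km i * ∏ l, c t l ^ νm i l))) ≤ 0 := by
  have hprod : ∀ (ν : Fin M → Fin N → ℕ) (i : Fin M), 0 < ∏ l, c t l ^ ν i l :=
    fun ν i => Finset.prod_pos fun l _ => pow_pos (hcpos t l) _
  set d : Fin N → ℝ := fun j => ∑ i, ((νm i j : ℝ) - (νp i j : ℝ)) *
        (kp i * ∏ l, c t l ^ νp i l - km i * ∏ l, c t l ^ νm i l) with hd
  set Rp : Fin M → ℝ := fun i => kp i * ∏ l, c t l ^ νp i l with hRp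
  set Rm : Fin M → ℝ := fun i => km i * ∏ l, c t l ^ νm i l with hRm
  have hRpp : ∀ i, 0 < Rp i := fun i => mul_pos (hkp i) (hprod νp i)
  have hRmp : ∀ i, 0 < Rm i := fun i => mul_pos (hkm i) (hprod νm i)
  have hderiv : HasDerivAt (fun u => ∑ j, (μ0 j + Real.log (c u j)) * c u j - ∑ j, c u j + G0)
      (∑ j, (μ0 j + Real.log (c t j)) * d j) t := by
    have h1 : HasDerivAt (fun u => ∑ j, (μ0 j + Real.log (c u j)) * c u j)
        (∑ j, ((μ0 j + Real.log (c t j)) * d j + d j)) t := by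
      apply HasDerivAt.fun_sum
      intro j _
      have hc : HasDerivAt (fun u => c u j) (d j) t := hcderiv t j
      have hlog : HasDerivAt (fun u => μ0 j + Real.log (c u j)) (d j / c t j) t := by
        simpa using (hc.log (ne_of_gt (hcpos t j))).const_add (μ0 j)
      have hmul := hlog.mul hc
      refine hmul.congr_deriv ?_
      field_simp [ne_of_gt (hcpos t j)]
      ring
    have h2 : HasDerivAt (fun u => ∑ j, c u j) (∑ j, d j) t :=
      HasDerivAt.fun_sum fun j _ => hcderiv t j
    have h3 := (h1.sub h2).add_const G0
    refine h3.congr_deriv ?_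
    rw [Finset.sum_add_distrib]
    ring
  have key : ∀ i, Real.log (Rp i / Rm i)
      = ∑ j, ((νp i j : ℝ) - (νm i j : ℝ)) * (μ0 j + Real.log (c t j)) := by
    intro i
    have hlogR : ∀ (ν : Fin M → Fin N → ℕ) (k : Fin M → ℝ), (∀ i, 0 < k i) →
        Real.log (k i * ∏ l, c t l ^ ν i l)
          = Real.log (k i) + ∑ l, (ν i l : ℝ) * Real.log (c t l) := by
      intro ν k hk
      rw [Real.log_mul (ne_of_gt (hk i)) (ne_of_gt (hprod ν i)),
          Real.log_prod (fun l _ => pow_ne_zero _ (ne_of_gt (hcpos t l)))]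
      congr 1
      exact Finset.sum_congr rfl fun l _ => Real.log_pow _ _
    have h := hcompat i
    rw [Real.log_div (ne_of_gt (hkp i)) (ne_of_gt (hkm i))] at h
    rw [Real.log_div (ne_of_gt (hRpp i)) (ne_of_gt (hRmp i)), hRp, hRm,
        hlogR νp kp hkp, hlogR νm km hkm]
    have hsplit : ∑ j, ((νp i j : ℝ) - (νm i j : ℝ)) * (μ0 j + Real.log (c t j))
        = ∑ j, ((νp i j : ℝ) - (νm i j : ℝ)) * μ0 j
          + ∑ j, ((νp i j : ℝ) * Real.log (c t j) - (νm i j : ℝ) * Real.log (c t j)) := by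
      rw [← Finset.sum_add_distrib]
      exact Finset.sum_congr rfl fun j _ => by ring
    rw [hsplit, ← h, Finset.sum_sub_distrib]
    ring
  have hsum : ∑ j, (μ0 j + Real.log (c t j)) * d j
      = -∑ i, (Rp i - Rm i) * Real.log (Rp i / Rm i) := by
    simp only [hd, Finset.mul_sum]
    rw [Finset.sum_comm, ← Finset.sum_neg_distrib]
    apply Finset.sum_congr rfl
    intro i _
    rw [key i, Finset.mul_sum, ← Finset.sum_neg_distrib]
    exact Finset.sum_congr rfl fun j _ => by ring
  have hnn : ∀ i ∈ Finset.univ, 0 ≤ (Rp i - Rm i) * Real.log (Rp i / Rm i) := by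
    intro i _
    rcases le_total (Rm i) (Rp i) with h | h
    · exact mul_nonneg (sub_nonneg.2 h) (Real.log_nonneg ((one_le_div (hRmp i)).2 h))
    · nlinarith [Real.log_nonpos (le_of_lt (div_pos (hRpp i) (hRmp i)))
        ((div_le_one (hRmp i)).2 h), sub_nonpos.2 h]
  exact ⟨hsum ▸ hderiv, neg_nonpos.2 (Finset.sum_nonneg hnn)⟩
end

section
/- Consider a mass-action chemical reaction network with N species and M reversible reactions, with chemical potentials μ_j(c_j) = μ_j^0 + ln c_j and Gibbs free energy G(c) = Σ_{j=1}^N μ_j(c_j) c_j − Σ_{j=1}^N c_j + G^0. Suppose c^{eq} in the open positive orthant is an equilibrium satisfying detailed balance, R_i^+(c^{eq}) = R_i^-(c^{eq}) for all i = 1,…,M, and that the compatibility relation ln(k_i^+/k_i^-) = Σ_{j=1}^N (ν⁺_{ij} − ν⁻_{ij}) μ_j^0 holds for every i. Let c(t), t ≥ 0, be a differentiable solution of the chemical rate equations in the open positive orthant whose initial value lies in the same stoichiometric compatibility class as c^{eq}, i.e., c(0) − c^{eq} belongs to the linear span of the net stoichiometric vectors ν_1, …, ν_M. Then G(c(t))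 − G(c^{eq}) = Σ_{j=1}^N [ c_j(t) ln( c_j(t)/c_j^{eq} ) − (c_j(t) − c_j^{eq}) ] ≥ 0 for all t ≥ 0; in particular the Gibbs free energy attains its minimum over the trajectory at the equilibrium. -/
lemma gibbs_pointwise_nonneg (x a : ℝ) (hx : 0 < x) (ha : 0 < a) :
    0 ≤ x * Real.log (x / a) - (x - a) := by
  have hy : 0 < x / a := div_pos hx ha
  have h1 : 1 - (x / a)⁻¹ ≤ Real.log (x / a) := by
    have := Real.add_one_le_exp (-Real.log (x / a))
    rw [Real.exp_neg, Real.exp_log hy] at this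
    linarith
  have hinv : (x / a)⁻¹ = a / x := by field_simp
  rw [hinv] at h1
  have h2 := mul_le_mul_of_nonneg_left h1 hx.le
  have hax : x * (a / x) = a := by field_simp
  nlinarith

/-- **The Gibbs free energy attains its minimum at a detailed-balanced
equilibrium.** Consider a mass-action network with rate functions
`R⁺_i(c) = kp i ∏_l c_l^{νp i l}`, `R⁻_i(c) = km i ∏_l c_l^{νm i l}`,
chemical potentials `μ_j(c_j) = μ0 j + ln c_j`, Gibbs free energy
`G(c) = Σ_j μ_j(c_j) c_j − Σ_j c_j + G0`, an equilibrium `ceq > 0` with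
detailed balance `R⁺_i(ceq) = R⁻_i(ceq)` for all `i`, and compatibility
`ln(kp i / km i) = Σ_j (νp i j − νm i j) μ0 j`.  If a positive solution
`c(t)` of the rate equations starts in the stoichiometric compatibility class
of `ceq`, then for all `t ≥ 0`:
`G(c(t)) − G(ceq) = Σ_j [ c_j ln(c_j/ceq_j) − (c_j − ceq_j) ] ≥ 0`. -/
theorem gibbs_free_energy_min_at_equilibrium
    {N M : ℕ} (νp νm : Fin M → Fin N → ℕ) (kp km : Fin M → ℝ)
    (hkp : ∀ i, 0 < kp i) (hkm : ∀ i, 0 < km i)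
    (μ0 : Fin N → ℝ) (G0 : ℝ)
    (hcompat : ∀ i, Real.log (kp i / km i)
      = ∑ j, ((νp i j : ℝ) - (νm i j : ℝ)) * μ0 j)
    (ceq : Fin N → ℝ) (hceq : ∀ j, 0 < ceq j)
    (hdb : ∀ i, kp i * ∏ l, ceq l ^ νp i l = km i * ∏ l, ceq l ^ νm i l)
    (c : ℝ → Fin N → ℝ) (hcpos : ∀ t j, 0 < c t j)
    (hcderiv : ∀ t j, HasDerivAt (fun u => c u j)
      (∑ i, ((νm i j : ℝ) - (νp i j : ℝ)) *
        (kp i * ∏ l, c t l ^ νp i l - km i * ∏ l, c t l ^ νm i l)) t)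
    (hinit : (fun j => c 0 j - ceq j) ∈
      Submodule.span ℝ (Set.range fun i : Fin M =>
        fun j : Fin N => ((νm i j : ℝ) - (νp i j : ℝ)))) :
    ∀ t : ℝ, 0 ≤ t →
      ((∑ j, (μ0 j + Real.log (c t j)) * c t j - ∑ j, c t j + G0)
        - (∑ j, (μ0 j + Real.log (ceq j)) * ceq j - ∑ j, ceq j + G0)
        = ∑ j, (c t j * Real.log (c t j / ceq j) - (c t j - ceq j)))
      ∧ 0 ≤ ∑ j, (c t j * Real.log (c t j / ceq j) - (c t j - ceq j)) := by
  set w : Fin N → ℝ := fun j => μ0 j + Real.log (ceq j) with hw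
  -- orthogonality of stoichiometric vectors to w
  have horth : ∀ i, ∑ j, ((νm i j : ℝ) - (νp i j : ℝ)) * w j = 0 := by
    intro i
    have hlog : Real.log (kp i) + ∑ l, (νp i l : ℝ) * Real.log (ceq l)
        = Real.log (km i) + ∑ l, (νm i l : ℝ) * Real.log (ceq l) := by
      have h1 : Real.log (kp i * ∏ l, ceq l ^ νp i l)
          = Real.log (kp i) + ∑ l, (νp i l : ℝ) * Real.log (ceq l) := by
        rw [Real.log_mul (hkp i).ne'
              (Finset.prod_pos (fun l _ => pow_pos (hceq l) _)).ne', Real.log_prod]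
        · simp [Real.log_pow]
        · intro l _; exact (pow_pos (hceq l) _).ne'
      have h2 : Real.log (km i * ∏ l, ceq l ^ νm i l)
          = Real.log (km i) + ∑ l, (νm i l : ℝ) * Real.log (ceq l) := by
        rw [Real.log_mul (hkm i).ne'
              (Finset.prod_pos (fun l _ => pow_pos (hceq l) _)).ne', Real.log_prod]
        · simp [Real.log_pow]
        · intro l _; exact (pow_pos (hceq l) _).ne'
      rw [← h1, ← h2, hdb i]
    have hc := hcompat i
    rw [Real.log_div (hkp i).ne' (hkm i).ne'] at hc
    have hexp : ∑ j, ((νm i j : ℝ) - (νp i j : ℝ)) * w j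
        = (∑ j, ((νm i j : ℝ) - (νp i j : ℝ)) * μ0 j)
          + ((∑ l, (νm i l : ℝ) * Real.log (ceq l))
             - ∑ l, (νp i l : ℝ) * Real.log (ceq l)) := by
      rw [← Finset.sum_sub_distrib, ← Finset.sum_add_distrib]
      apply Finset.sum_congr rfl
      intro j _
      simp only [hw]; ring
    have hc' : (∑ j, ((νm i j : ℝ) - (νp i j : ℝ)) * μ0 j)
        = -(Real.log (kp i) - Real.log (km i)) := by
      rw [hc, ← Finset.sum_neg_distrib]
      apply Finset.sum_congr rfl; intro j _; ring
    rw [hexp, hc']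
    linarith
  -- every element of the span is orthogonal to w
  have hspan : ∀ x ∈ Submodule.span ℝ (Set.range fun i : Fin M =>
      fun j : Fin N => ((νm i j : ℝ) - (νp i j : ℝ))),
      ∑ j, x j * w j = 0 := by
    intro x hx
    induction hx using Submodule.span_induction with
    | mem y hy => obtain ⟨i, rfl⟩ := hy; exact horth i
    | zero => simp
    | add y z _ _ hy hz =>
        simp only [Pi.add_apply, add_mul, Finset.sum_add_distrib, hy, hz, add_zero]
    | smul a y _ hy =>
        simp only [Pi.smul_apply, smul_eq_mul, mul_assoc, ← Finset.mul_sum, hy, mul_zero]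
  -- conservation along the trajectory
  have hconst : ∀ t : ℝ, ∑ j, (c t j - ceq j) * w j = 0 := by
    have hφ : ∀ u : ℝ, HasDerivAt (fun v => ∑ j, c v j * w j) 0 u := by
      intro u
      have h := HasDerivAt.sum (fun j (_ : j ∈ Finset.univ) =>
        (hcderiv u j).mul_const (w j))
      have hz : (∑ j, (∑ i, ((νm i j : ℝ) - (νp i j : ℝ)) *
          (kp i * ∏ l, c u l ^ νp i l - km i * ∏ l, c u l ^ νm i l)) * w j) = 0 := by
        simp only [Finset.sum_mul]
        rw [Finset.sum_comm]
        apply Finset.sum_eq_zero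
        intro i _
        have heq : ∑ j, (((νm i j : ℝ) - (νp i j : ℝ)) *
            (kp i * ∏ l, c u l ^ νp i l - km i * ∏ l, c u l ^ νm i l)) * w j
            = (∑ j, ((νm i j : ℝ) - (νp i j : ℝ)) * w j) *
              (kp i * ∏ l, c u l ^ νp i l - km i * ∏ l, c u l ^ νm i l) := by
          rw [Finset.sum_mul]
          apply Finset.sum_congr rfl; intro j _; ring
        rw [heq, horth i, zero_mul]
      rw [hz] at h
      have e : (∑ i, fun y => c y i * w i) = fun v => ∑ j, c v j * w j := by
        ext v; rw [Finset.sum_apply]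
      rwa [e] at h
    have hdiff : Differentiable ℝ (fun v => ∑ j, c v j * w j) :=
      fun u => (hφ u).differentiableAt
    have hcst : ∀ t : ℝ, (∑ j, c t j * w j) = ∑ j, c 0 j * w j := by
      intro t
      exact is_const_of_deriv_eq_zero hdiff (fun u => (hφ u).deriv) t 0
    intro t
    have h0 : ∑ j, (c 0 j - ceq j) * w j = 0 := hspan _ hinit
    have : ∑ j, (c t j - ceq j) * w j
        = (∑ j, c t j * w j) - (∑ j, c 0 j * w j) + ∑ j, (c 0 j - ceq j) * w j := by
      rw [← Finset.sum_sub_distrib, ← Finset.sum_add_distrib]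
      apply Finset.sum_congr rfl; intro j _; ring
    rw [this, hcst t, h0]; ring
  intro t _
  constructor
  · -- equality
    have hper : ∀ j, (μ0 j + Real.log (c t j)) * c t j - c t j
        - ((μ0 j + Real.log (ceq j)) * ceq j - ceq j)
        = (c t j * Real.log (c t j / ceq j) - (c t j - ceq j))
          + (c t j - ceq j) * w j := by
      intro j
      rw [Real.log_div (hcpos t j).ne' (hceq j).ne']
      simp only [hw]; ring
    have hsum : ∑ j, ((μ0 j + Real.log (c t j)) * c t j - c t j
        - ((μ0 j + Real.log (ceq j)) * ceq j - ceq j))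
        = (∑ j, (c t j * Real.log (c t j / ceq j) - (c t j - ceq j)))
          + ∑ j, (c t j - ceq j) * w j := by
      rw [← Finset.sum_add_distrib]
      exact Finset.sum_congr rfl (fun j _ => hper j)
    have hexpand : ∑ j, ((μ0 j + Real.log (c t j)) * c t j - c t j
        - ((μ0 j + Real.log (ceq j)) * ceq j - ceq j))
        = (∑ j, (μ0 j + Real.log (c t j)) * c t j - ∑ j, c t j)
          - (∑ j, (μ0 j + Real.log (ceq j)) * ceq j - ∑ j, ceq j) := by
      rw [← Finset.sum_sub_distrib, ← Finset.sum_sub_distrib, ← Finset.sum_sub_distrib]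
    rw [hconst t, add_zero] at hsum
    rw [hexpand] at hsum
    linarith
  · -- nonnegativity
    apply Finset.sum_nonneg
    intro j _
    exact gibbs_pointwise_nonneg _ _ (hcpos t j) (hceq j)
end

section
/- Let R_i^± (i = 1,…,M) be positive-valued rate functions on the open positive orthant of ℝ^N and let φ^{ss} be a differentiable function on the open positive orthant satisfying the stationary Hamilton–Jacobi equation Σ_{i=1}^M [ R_i^+(c) ( exp(ν_i·∇φ^{ss}(c)) − 1 ) + R_i^-(c) ( exp(−ν_i·∇φ^{ss}(c)) − 1 ) ] = 0 for all c in the open positive orthant. Then along any differentiable solution c(t) of the chemical rate equations dc_j/dt = Σ_{i=1}^M ν_{ij} (R_i^+(c) − R_i^-(c)) taking values in the open positive orthant, one has d φ^{ss}(c(t))/dt ≤ 0; that is, the stationary large-deviations rate function is a Lyapunov function for the deterministic rate equations. -/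
/-- **The stationary large-deviations rate function is a Lyapunov function.**
Let `R⁺_i, R⁻_i` be positive rate functions on the open positive orthant and
let `φss` be differentiable there (with derivative `Dφ c` at each point `c`)
and satisfy the stationary Hamilton–Jacobi equation
`Σ_i [ R⁺_i(c)(e^{ν_i·∇φss(c)} − 1) + R⁻_i(c)(e^{−ν_i·∇φss(c)} − 1) ] = 0`.
Then along any positive solution of the rate equations
`dc_j/dt = Σ_i ν_{ij} (R⁺_i(c) − R⁻_i(c))` one has `d φss(c(t))/dt ≤ 0`. -/
theorem stationary_rate_function_is_lyapunov
    {N M : ℕ} (ν : Fin M → Fin N → ℤ)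
    (Rp Rm : Fin M → (Fin N → ℝ) → ℝ)
    (hRp : ∀ i, ∀ c : Fin N → ℝ, (∀ j, 0 < c j) → 0 < Rp i c)
    (hRm : ∀ i, ∀ c : Fin N → ℝ, (∀ j, 0 < c j) → 0 < Rm i c)
    (φss : (Fin N → ℝ) → ℝ)
    (Dφ : (Fin N → ℝ) → ((Fin N → ℝ) →L[ℝ] ℝ))
    (hφ : ∀ c : Fin N → ℝ, (∀ j, 0 < c j) → HasFDerivAt φss (Dφ c) c)
    (hHJE : ∀ c : Fin N → ℝ, (∀ j, 0 < c j) →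
      ∑ i, (Rp i c * (Real.exp (Dφ c fun j => (ν i j : ℝ)) - 1)
          + Rm i c * (Real.exp (-(Dφ c fun j => (ν i j : ℝ))) - 1)) = 0)
    (c : ℝ → Fin N → ℝ) (hcpos : ∀ t j, 0 < c t j)
    (hcderiv : ∀ t j, HasDerivAt (fun u => c u j)
      (∑ i, (ν i j : ℝ) * (Rp i (c t) - Rm i (c t))) t) :
    ∀ t : ℝ, deriv (fun u => φss (c u)) t ≤ 0 := by
  intro t
  set x := c t with hx
  have hxpos : ∀ j, 0 < x j := hcpos t
  -- velocity
  set v : Fin N → ℝ := fun j => ∑ i, (ν i j : ℝ) * (Rp i x - Rm i x) with hv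
  have hcv : HasDerivAt c v t := hasDerivAt_pi.2 fun j => hcderiv t j
  have hcomp : HasDerivAt (fun u => φss (c u)) (Dφ x v) t :=
    (hφ x hxpos).comp_hasDerivAt t hcv
  rw [hcomp.deriv]
  -- linearity: Dφ x v = ∑ i (Rp - Rm) * Dφ x ν_i
  have hvsum : v = ∑ i, (Rp i x - Rm i x) • (fun j => (ν i j : ℝ)) := by
    funext j
    simp [hv, Finset.sum_apply, mul_comm]
  have hDv : Dφ x v = ∑ i, (Rp i x - Rm i x) * Dφ x (fun j => (ν i j : ℝ)) := by
    rw [hvsum, map_sum]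
    refine Finset.sum_congr rfl fun i _ => ?_
    rw [map_smul]; rfl
  rw [hDv]
  have key : ∀ i : Fin M, (Rp i x - Rm i x) * Dφ x (fun j => (ν i j : ℝ)) ≤
      Rp i x * (Real.exp (Dφ x fun j => (ν i j : ℝ)) - 1)
        + Rm i x * (Real.exp (-(Dφ x fun j => (ν i j : ℝ))) - 1) := by
    intro i
    set a := Dφ x (fun j => (ν i j : ℝ))
    have h1 : a ≤ Real.exp a - 1 := by linarith [Real.add_one_le_exp a]
    have h2 : -a ≤ Real.exp (-a) - 1 := by linarith [Real.add_one_le_exp (-a)]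
    nlinarith [hRp i x hxpos, hRm i x hxpos]
  calc ∑ i, (Rp i x - Rm i x) * Dφ x (fun j => (ν i j : ℝ))
      ≤ ∑ i, (Rp i x * (Real.exp (Dφ x fun j => (ν i j : ℝ)) - 1)
          + Rm i x * (Real.exp (-(Dφ x fun j => (ν i j : ℝ))) - 1)) :=
        Finset.sum_le_sum fun i _ => key i
    _ = 0 := hHJE x hxpos
end

section
/- Consider a mass-action chemical reaction network with N species and M reversible reactions. Suppose c^{ss} in the open positive orthant is complex-balanced, i.e., Σ_{i=1}^M ( R_i^+(c^{ss}) − R_i^-(c^{ss}) ) [ ∏_{j=1}^N (c_j/c_j^{ss})^{ν⁺_{ij}} − ∏_{j=1}^N (c_j/c_j^{ss})^{ν⁻_{ij}} ] = 0 for every c in the open positive orthant. Then the function φ^{ss}(c) = Σ_{j=1}^N [ c_j ln( c_j / c_j^{ss} ) − c_j + c_j^{ss} ] satisfies the stationary Hamilton–Jacobi equation Σ_{i=1}^M [ R_i^+(c) ( exp(ν_i·∇φ^{ss}(c)) − 1 ) + R_i^-(c) ( exp(−ν_i·∇φ^{ss}(c)) − 1 ) ] = 0 for all c in the open positive orthant.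 -/
lemma aux_alg (a b kp km P Q : ℝ) (hP : P ≠ 0) (hQ : Q ≠ 0) :
    kp * (a * P) * (Q / P - 1) + km * (b * Q) * ((Q / P)⁻¹ - 1)
      = -((kp * a - km * b) * (P - Q)) := by
  field_simp
  ring

/-- **Complex balance yields an explicit solution of the stationary
Hamilton–Jacobi equation.**  For a mass-action network with rate functions
`R⁺_i(c) = kp i ∏_l c_l^{νp i l}`, `R⁻_i(c) = km i ∏_l c_l^{νm i l}`, suppose
`css > 0` is complex-balanced:
`Σ_i (R⁺_i(css) − R⁻_i(css)) [ ∏_j (c_j/css_j)^{νp i j} − ∏_j (c_j/css_j)^{νm i j} ] = 0`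
for every `c` in the open positive orthant.  Then
`φss(c) = Σ_j [ c_j ln(c_j/css_j) − c_j + css_j ]`, whose gradient is
`∂φss/∂c_j = ln(c_j/css_j)` so that `ν_i·∇φss(c) = Σ_j (νm i j − νp i j) ln(c_j/css_j)`,
satisfies the stationary Hamilton–Jacobi equation
`Σ_i [ R⁺_i(c)(e^{ν_i·∇φss(c)} − 1) + R⁻_i(c)(e^{−ν_i·∇φss(c)} − 1) ] = 0`
on the open positive orthant. -/
theorem complex_balance_solves_stationary_HJE
    {N M : ℕ} (νp νm : Fin M → Fin N → ℕ) (kp km : Fin M → ℝ)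
    (hkp : ∀ i, 0 < kp i) (hkm : ∀ i, 0 < km i)
    (css : Fin N → ℝ) (hcss : ∀ j, 0 < css j)
    (hcb : ∀ c : Fin N → ℝ, (∀ j, 0 < c j) →
      ∑ i, (kp i * ∏ l, css l ^ νp i l - km i * ∏ l, css l ^ νm i l) *
        (∏ j, (c j / css j) ^ νp i j - ∏ j, (c j / css j) ^ νm i j) = 0) :
    ∀ c : Fin N → ℝ, (∀ j, 0 < c j) →
      ∑ i, ((kp i * ∏ l, c l ^ νp i l) *
          (Real.exp (∑ j, ((νm i j : ℝ) - (νp i j : ℝ)) * Real.log (c j / css j)) - 1)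
        + (km i * ∏ l, c l ^ νm i l) *
          (Real.exp (-∑ j, ((νm i j : ℝ) - (νp i j : ℝ)) * Real.log (c j / css j)) - 1))
        = 0 := by
  intro c hc
  have hx : ∀ j, 0 < c j / css j := fun j => div_pos (hc j) (hcss j)
  have key : ∀ i : Fin M,
      (kp i * ∏ l, c l ^ νp i l) *
          (Real.exp (∑ j, ((νm i j : ℝ) - (νp i j : ℝ)) * Real.log (c j / css j)) - 1)
        + (km i * ∏ l, c l ^ νm i l) *
          (Real.exp (-∑ j, ((νm i j : ℝ) - (νp i j : ℝ)) * Real.log (c j / css j)) - 1)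
      = -((kp i * ∏ l, css l ^ νp i l - km i * ∏ l, css l ^ νm i l) *
          (∏ j, (c j / css j) ^ νp i j - ∏ j, (c j / css j) ^ νm i j)) := by
    intro i
    have hP : (0:ℝ) < ∏ j, (c j / css j) ^ νp i j :=
      Finset.prod_pos fun j _ => pow_pos (hx j) _
    have hQ : (0:ℝ) < ∏ j, (c j / css j) ^ νm i j :=
      Finset.prod_pos fun j _ => pow_pos (hx j) _
    have hE : Real.exp (∑ j, ((νm i j : ℝ) - (νp i j : ℝ)) * Real.log (c j / css j))
        = (∏ j, (c j / css j) ^ νm i j) / (∏ j, (c j / css j) ^ νp i j) := by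
      rw [Real.exp_sum, ← Finset.prod_div_distrib]
      refine Finset.prod_congr rfl fun j _ => ?_
      rw [sub_mul, Real.exp_sub, Real.exp_nat_mul, Real.exp_nat_mul,
        Real.exp_log (hx j)]
    have hcP : ∏ l, c l ^ νp i l
        = (∏ l, css l ^ νp i l) * ∏ l, (c l / css l) ^ νp i l := by
      rw [← Finset.prod_mul_distrib]
      refine Finset.prod_congr rfl fun l _ => ?_
      rw [← mul_pow, mul_div_cancel₀ _ (hcss l).ne']
    have hcQ : ∏ l, c l ^ νm i l
        = (∏ l, css l ^ νm i l) * ∏ l, (c l / css l) ^ νm i l := by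
      rw [← Finset.prod_mul_distrib]
      refine Finset.prod_congr rfl fun l _ => ?_
      rw [← mul_pow, mul_div_cancel₀ _ (hcss l).ne']
    rw [Real.exp_neg, hE, hcP, hcQ]
    exact aux_alg _ _ _ _ _ _ hP.ne' hQ.ne' 
  calc ∑ i, ((kp i * ∏ l, c l ^ νp i l) *
          (Real.exp (∑ j, ((νm i j : ℝ) - (νp i j : ℝ)) * Real.log (c j / css j)) - 1)
        + (km i * ∏ l, c l ^ νm i l) *
          (Real.exp (-∑ j, ((νm i j : ℝ) - (νp i j : ℝ)) * Real.log (c j / css j)) - 1))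
      = ∑ i, -((kp i * ∏ l, css l ^ νp i l - km i * ∏ l, css l ^ νm i l) *
          (∏ j, (c j / css j) ^ νp i j - ∏ j, (c j / css j) ^ νm i j)) :=
        Finset.sum_congr rfl fun i _ => key i
    _ = 0 := by rw [Finset.sum_neg_distrib, hcb c hc, neg_zero]
end

section
/- Consider a mass-action chemical reaction network with N species and M reversible reactions, and suppose c^{ss} in the open positive orthant is complex-balanced, i.e., Σ_{i=1}^M ( R_i^+(c^{ss}) − R_i^-(c^{ss}) ) [ ∏_{j=1}^N (c_j/c_j^{ss})^{ν⁺_{ij}} − ∏_{j=1}^N (c_j/c_j^{ss})^{ν⁻_{ij}} ] = 0 for every c in the open positive orthant. Define the free energy φ^{ss}(c) = Σ_{j=1}^N [ c_j ln( c_j / c_j^{ss} ) − c_j + c_j^{ss} ]. Then along any differentiable solution c(t) of the chemical rate equations dc_j/dt = Σ_{i=1}^M ν_{ij} (R_i^+(c) − R_i^-(c)) taking values in the open positive orthant, one has d φ^{ss}(c(t))/dt ≤ 0. -/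
open Real Finset

lemma key_ineq (a b xp xm : ℝ) (ha : 0 < a) (hb : 0 < b) (hxp : 0 < xp) (hxm : 0 < xm) :
    (a * xp - b * xm) * (Real.log xm - Real.log xp) ≤ (a - b) * (xm - xp) := by
  have h1 : Real.log (xm / xp) ≤ xm / xp - 1 := Real.log_le_sub_one_of_pos (by positivity)
  have h2 : Real.log (xp / xm) ≤ xp / xm - 1 := Real.log_le_sub_one_of_pos (by positivity)
  rw [Real.log_div hxm.ne' hxp.ne'] at h1
  rw [Real.log_div hxp.ne' hxm.ne'] at h2
  have h3 : xp * (Real.log xm - Real.log xp) ≤ xm - xp := by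
    calc xp * (Real.log xm - Real.log xp) ≤ xp * (xm / xp - 1) :=
          mul_le_mul_of_nonneg_left h1 hxp.le
      _ = xm - xp := by field_simp
  have h4 : xm * (Real.log xp - Real.log xm) ≤ xp - xm := by
    calc xm * (Real.log xp - Real.log xm) ≤ xm * (xp / xm - 1) :=
          mul_le_mul_of_nonneg_left h2 hxm.le
      _ = xp - xm := by field_simp
  nlinarith [mul_le_mul_of_nonneg_left h3 ha.le, mul_le_mul_of_nonneg_left h4 hb.le]

lemma free_energy_hasDerivAt {s x : ℝ} (hs : 0 < s) (hx : 0 < x) :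
    HasDerivAt (fun z : ℝ => z * Real.log (z / s) - z + s) (Real.log (x / s)) x := by
  have h1 : HasDerivAt (fun z : ℝ => z * Real.log z - z * Real.log s - z + s)
      ((Real.log x + 1) - 1 * Real.log s - 1) x :=
    (((Real.hasDerivAt_mul_log hx.ne').sub ((hasDerivAt_id x).mul_const _)).sub
      (hasDerivAt_id x)).add_const _
  have h2 : HasDerivAt (fun z : ℝ => z * Real.log z - z * Real.log s - z + s)
      (Real.log (x / s)) x := by
    convert h1 using 1
    rw [Real.log_div hx.ne' hs.ne']; ring
  apply h2.congr_of_eventuallyEq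
  filter_upwards [eventually_gt_nhds hx] with z hz
  rw [Real.log_div hz.ne' hs.ne']; ring

/-- **The free energy decreases along complex-balanced mass-action kinetics.**
For a mass-action network with rate functions `R⁺_i(c) = kp i ∏_l c_l^{νp i l}`
and `R⁻_i(c) = km i ∏_l c_l^{νm i l}`, suppose `css > 0` is complex-balanced:
`Σ_i (R⁺_i(css) − R⁻_i(css)) [ ∏_j (c_j/css_j)^{νp i j} − ∏_j (c_j/css_j)^{νm i j} ] = 0`
for every `c` in the open positive orthant.  Then the free energy
`φss(c) = Σ_j [ c_j ln(c_j/css_j) − c_j + css_j ]` is nonincreasing along any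
positive solution of the rate equations
`dc_j/dt = Σ_i (νm i j − νp i j)(R⁺_i(c) − R⁻_i(c))`:
`d φss(c(t))/dt ≤ 0`. -/
theorem free_energy_decreases_complex_balanced
    {N M : ℕ} (νp νm : Fin M → Fin N → ℕ) (kp km : Fin M → ℝ)
    (hkp : ∀ i, 0 < kp i) (hkm : ∀ i, 0 < km i)
    (css : Fin N → ℝ) (hcss : ∀ j, 0 < css j)
    (hcb : ∀ c : Fin N → ℝ, (∀ j, 0 < c j) →
      ∑ i, (kp i * ∏ l, css l ^ νp i l - km i * ∏ l, css l ^ νm i l) *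
        (∏ j, (c j / css j) ^ νp i j - ∏ j, (c j / css j) ^ νm i j) = 0)
    (c : ℝ → Fin N → ℝ) (hcpos : ∀ t j, 0 < c t j)
    (hcderiv : ∀ t j, HasDerivAt (fun u => c u j)
      (∑ i, ((νm i j : ℝ) - (νp i j : ℝ)) *
        (kp i * ∏ l, c t l ^ νp i l - km i * ∏ l, c t l ^ νm i l)) t) :
    ∀ t : ℝ, deriv (fun u => ∑ j, (c u j * Real.log (c u j / css j) - c u j + css j)) t ≤ 0 := by
  intro t
  set D : Fin N → ℝ := fun j => ∑ i, ((νm i j : ℝ) - (νp i j : ℝ)) *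
      (kp i * ∏ l, c t l ^ νp i l - km i * ∏ l, c t l ^ νm i l) with hD
  -- Step 1: compute the derivative
  have hderiv : ∀ j : Fin N,
      HasDerivAt (fun u => c u j * Real.log (c u j / css j) - c u j + css j)
        (Real.log (c t j / css j) * D j) t := fun j =>
    HasDerivAt.comp t (free_energy_hasDerivAt (hcss j) (hcpos t j)) (hcderiv t j)
  have hsum : HasDerivAt (fun u => ∑ j, (c u j * Real.log (c u j / css j) - c u j + css j))
      (∑ j, Real.log (c t j / css j) * D j) t := HasDerivAt.fun_sum (fun j _ => hderiv j)
  rw [hsum.deriv]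
  -- Step 2: the algebra
  set y : Fin N → ℝ := fun j => c t j / css j with hy
  have hypos : ∀ j, 0 < y j := fun j => div_pos (hcpos t j) (hcss j)
  set xp : Fin M → ℝ := fun i => ∏ j, y j ^ νp i j with hxp
  set xm : Fin M → ℝ := fun i => ∏ j, y j ^ νm i j with hxm
  set a : Fin M → ℝ := fun i => kp i * ∏ l, css l ^ νp i l with ha
  set b : Fin M → ℝ := fun i => km i * ∏ l, css l ^ νm i l with hb
  have hxppos : ∀ i, 0 < xp i := fun i => Finset.prod_pos fun j _ => pow_pos (hypos j) _
  have hxmpos : ∀ i, 0 < xm i := fun i => Finset.prod_pos fun j _ => pow_pos (hypos j) _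
  have hapos : ∀ i, 0 < a i := fun i =>
    mul_pos (hkp i) (Finset.prod_pos fun l _ => pow_pos (hcss l) _)
  have hbpos : ∀ i, 0 < b i := fun i =>
    mul_pos (hkm i) (Finset.prod_pos fun l _ => pow_pos (hcss l) _)
  have hprod : ∀ (ν : Fin M → Fin N → ℕ) (i : Fin M),
      (∏ l, css l ^ ν i l) * ∏ j, y j ^ ν i j = ∏ l, c t l ^ ν i l := by
    intro ν i
    rw [← Finset.prod_mul_distrib]
    refine Finset.prod_congr rfl fun l _ => ?_
    rw [← mul_pow, hy]
    congr 1
    show css l * (c t l / css l) = c t l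
    rw [mul_comm, div_mul_cancel₀ _ (hcss l).ne']
  have hlog : ∀ (ν : Fin M → Fin N → ℕ) (i : Fin M),
      ∑ j, (ν i j : ℝ) * Real.log (y j) = Real.log (∏ j, y j ^ ν i j) := by
    intro ν i
    rw [Real.log_prod fun j _ => (pow_pos (hypos j) _).ne']
    exact Finset.sum_congr rfl fun j _ => (Real.log_pow _ _).symm
  have hre : ∑ j, Real.log (c t j / css j) * D j
      = ∑ i, (a i * xp i - b i * xm i) * (Real.log (xm i) - Real.log (xp i)) := by
    simp only [hD, Finset.mul_sum]
    rw [Finset.sum_comm]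
    refine Finset.sum_congr rfl fun i _ => ?_
    have h1 : ∑ j, Real.log (c t j / css j) * (((νm i j : ℝ) - (νp i j : ℝ)) *
        (kp i * ∏ l, c t l ^ νp i l - km i * ∏ l, c t l ^ νm i l))
        = (∑ j, ((νm i j : ℝ) * Real.log (y j)) - ∑ j, ((νp i j : ℝ) * Real.log (y j))) *
          (kp i * ∏ l, c t l ^ νp i l - km i * ∏ l, c t l ^ νm i l) := by
      rw [← Finset.sum_sub_distrib, Finset.sum_mul]
      exact Finset.sum_congr rfl fun j _ => by rw [hy]; ring
    rw [h1, hlog νm i, hlog νp i, ← hprod νp i, ← hprod νm i]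
    simp only [hxp, hxm, ha, hb]
    ring
  rw [hre]
  have hcb' : ∑ i, (a i - b i) * (xp i - xm i) = 0 := hcb (c t) (hcpos t)
  calc ∑ i, (a i * xp i - b i * xm i) * (Real.log (xm i) - Real.log (xp i))
      ≤ ∑ i, (a i - b i) * (xm i - xp i) :=
        Finset.sum_le_sum fun i _ =>
          key_ineq _ _ _ _ (hapos i) (hbpos i) (hxppos i) (hxmpos i)
    _ = -∑ i, (a i - b i) * (xp i - xm i) := by
        rw [← Finset.sum_neg_distrib]
        exact Finset.sum_congr rfl fun i _ => by ring
    _ = 0 := by rw [hcb', neg_zero]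
end

section
/- Let R_i^± (i = 1,…,M) be positive-valued rate functions on the open positive orthant of ℝ^N, and let φ^{ss} be a differentiable function satisfying the stationary Hamilton–Jacobi equation Σ_{i=1}^M [ R_i^+(c) ( exp(ν_i·∇φ^{ss}(c)) − 1 ) + R_i^-(c) ( exp(−ν_i·∇φ^{ss}(c)) − 1 ) ] = 0 at a point c of the open positive orthant. Then the macroscopic house-keeping energy input rate at c is nonnegative: Σ_{i=1}^M ( R_i^+(c) − R_i^-(c) ) ln[ ( R_i^+(c) / R_i^-(c) ) · exp( ν_i·∇φ^{ss}(c) ) ] ≥ 0. -/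
lemma housekeeping_pointwise (p m x : ℝ) (hp : 0 < p) (hm : 0 < m) :
    p + m - p * Real.exp x - m * Real.exp (-x)
      ≤ (p - m) * Real.log ((p / m) * Real.exp x) := by
  have hL : Real.log ((p / m) * Real.exp x) = Real.log p - Real.log m + x := by
    rw [Real.log_mul (by positivity) (Real.exp_ne_zero x),
      Real.log_div hp.ne' hm.ne', Real.log_exp]
  set L := Real.log p - Real.log m + x with hLdef
  have h1 : -L + 1 ≤ Real.exp (-L) := Real.add_one_le_exp (-L)
  have h2 : L + 1 ≤ Real.exp L := Real.add_one_le_exp L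
  have e1 : p * Real.exp (-L) = m * Real.exp (-x) := by
    rw [show -L = -x + (Real.log m - Real.log p) by rw [hLdef]; ring,
      Real.exp_add, Real.exp_sub, Real.exp_log hm, Real.exp_log hp]
    field_simp
  have e2 : m * Real.exp L = p * Real.exp x := by
    rw [show L = x + (Real.log p - Real.log m) by rw [hLdef]; ring,
      Real.exp_add, Real.exp_sub, Real.exp_log hm, Real.exp_log hp]
    field_simp
  have A : p * (-L + 1) ≤ m * Real.exp (-x) := by
    rw [← e1]; exact mul_le_mul_of_nonneg_left h1 hp.le
  have B : m * (L + 1) ≤ p * Real.exp x := by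
    rw [← e2]; exact mul_le_mul_of_nonneg_left h2 hm.le
  rw [hL]
  nlinarith [A, B]

/-- **Nonnegativity of the macroscopic house-keeping energy input rate.**
Let `R⁺_i, R⁻_i` be rate functions that are positive at a point `c` of the open
positive orthant, and let `φss` be differentiable at `c` with derivative `Dφ`
satisfying the stationary Hamilton–Jacobi equation
`Σ_i [ R⁺_i(c)(e^{ν_i·∇φss(c)} − 1) + R⁻_i(c)(e^{−ν_i·∇φss(c)} − 1) ] = 0`.
Then the house-keeping energy input rate at `c` is nonnegative:
`Σ_i (R⁺_i(c) − R⁻_i(c)) ln[ (R⁺_i(c)/R⁻_i(c)) e^{ν_i·∇φss(c)} ] ≥ 0`. -/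
theorem macroscopic_housekeeping_rate_nonneg
    {N M : ℕ} (ν : Fin M → Fin N → ℤ)
    (Rp Rm : Fin M → (Fin N → ℝ) → ℝ)
    (c : Fin N → ℝ) (hc : ∀ j, 0 < c j)
    (hRp : ∀ i, 0 < Rp i c) (hRm : ∀ i, 0 < Rm i c)
    (φss : (Fin N → ℝ) → ℝ) (Dφ : (Fin N → ℝ) →L[ℝ] ℝ)
    (hφ : HasFDerivAt φss Dφ c)
    (hHJE : ∑ i, (Rp i c * (Real.exp (Dφ fun j => (ν i j : ℝ)) - 1)
        + Rm i c * (Real.exp (-(Dφ fun j => (ν i j : ℝ))) - 1)) = 0) :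
    0 ≤ ∑ i, (Rp i c - Rm i c) *
        Real.log ((Rp i c / Rm i c) * Real.exp (Dφ fun j => (ν i j : ℝ))) := by
  have key : ∀ i ∈ Finset.univ,
      -(Rp i c * (Real.exp (Dφ fun j => (ν i j : ℝ)) - 1)
        + Rm i c * (Real.exp (-(Dφ fun j => (ν i j : ℝ))) - 1))
      ≤ (Rp i c - Rm i c) *
        Real.log ((Rp i c / Rm i c) * Real.exp (Dφ fun j => (ν i j : ℝ))) := by
    intro i _
    have := housekeeping_pointwise (Rp i c) (Rm i c)
      (Dφ fun j => (ν i j : ℝ)) (hRp i) (hRm i)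
    linarith
  calc (0:ℝ)
      = ∑ i, -(Rp i c * (Real.exp (Dφ fun j => (ν i j : ℝ)) - 1)
        + Rm i c * (Real.exp (-(Dφ fun j => (ν i j : ℝ))) - 1)) := by
        rw [Finset.sum_neg_distrib, hHJE, neg_zero]
    _ ≤ _ := Finset.sum_le_sum key
end

section
/- (Vol'pert nonnegativity.) Consider a mass-action chemical reaction network with N species and M reversible reactions, so that the right-hand side of the chemical rate equations B_j(c) = Σ_{i=1}^M (ν⁻_{ij} − ν⁺_{ij}) [ k_i^+ ∏_{l=1}^N c_l^{ν⁺_{il}} − k_i^- ∏_{l=1}^N c_l^{ν⁻_{il}} ] is a polynomial vector field on ℝ^N. Let c : [0, T] → ℝ^N be a differentiable solution of dc_j/dt = B_j(c(t)) with componentwise nonnegative initial condition c_j(0) ≥ 0 for all j. Then c_j(t) ≥ 0 for all j = 1,…,N and all t ∈ [0, T]; i.e., mass-action systems do not admit negative solutions from nonnegative initial concentrations. -/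
open Set Metric Filter Real Topology

private lemma contDiff_prod_pow {N : ℕ} (a : Fin N → ℕ) (s : Finset (Fin N)) :
    ContDiff ℝ 1 (fun x : Fin N → ℝ => ∏ l ∈ s, x l ^ a l) := by
  classical
  induction s using Finset.induction_on with
  | empty => simpa using contDiff_const
  | @insert a s h ih =>
      simp only [Finset.prod_insert h]
      exact ((contDiff_apply ℝ ℝ _).pow _).mul ih

/-- Quasipositivity of the mass-action vector field on the nonnegative orthant. -/
private lemma massAction_quasipos {N M : ℕ} (νp νm : Fin M → Fin N → ℕ) (kp km : Fin M → ℝ)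
    (hkp : ∀ i, 0 < kp i) (hkm : ∀ i, 0 < km i)
    (x : Fin N → ℝ) (hx : ∀ l, 0 ≤ x l) (j : Fin N) (hxj : x j = 0) :
    0 ≤ ∑ i, ((νm i j : ℝ) - (νp i j : ℝ)) *
        (kp i * ∏ l, x l ^ νp i l - km i * ∏ l, x l ^ νm i l) := by
  apply Finset.sum_nonneg
  intro i _
  have hP : (0:ℝ) ≤ ∏ l, x l ^ νp i l :=
    Finset.prod_nonneg fun l _ => pow_nonneg (hx l) _
  have hM : (0:ℝ) ≤ ∏ l, x l ^ νm i l :=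
    Finset.prod_nonneg fun l _ => pow_nonneg (hx l) _
  rcases Nat.eq_zero_or_pos (νp i j) with hp | hp
  · rcases Nat.eq_zero_or_pos (νm i j) with hm | hm
    · simp [hp, hm]
    · have hz : ∏ l, x l ^ νm i l = 0 :=
        Finset.prod_eq_zero (Finset.mem_univ j) (by rw [hxj]; exact zero_pow hm.ne')
      rw [hz, hp]
      simp only [Nat.cast_zero, sub_zero, mul_zero]
      exact mul_nonneg (Nat.cast_nonneg _) (mul_nonneg (hkp i).le hP)
  · have hPz : ∏ l, x l ^ νp i l = 0 :=
      Finset.prod_eq_zero (Finset.mem_univ j) (by rw [hxj]; exact zero_pow hp.ne')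
    rcases Nat.eq_zero_or_pos (νm i j) with hm | hm
    · rw [hPz, hm]
      simp only [Nat.cast_zero, zero_sub, mul_zero, neg_mul]
      rw [mul_neg, neg_neg]
      exact mul_nonneg (Nat.cast_nonneg _) (mul_nonneg (hkm i).le hM)
    · have hMz : ∏ l, x l ^ νm i l = 0 :=
        Finset.prod_eq_zero (Finset.mem_univ j) (by rw [hxj]; exact zero_pow hm.ne')
      rw [hPz, hMz]
      simp

/-- **Vol'pert's nonnegativity theorem for mass-action kinetics.**
For a mass-action network the right-hand side of the rate equations,
`B_j(c) = Σ_i (νm i j − νp i j) [ kp i ∏_l c_l^{νp i l} − km i ∏_l c_l^{νm i l} ]`,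
is a polynomial vector field on `ℝ^N`.  Any differentiable solution
`c : [0,T] → ℝ^N` of `dc_j/dt = B_j(c(t))` with componentwise nonnegative
initial condition stays componentwise nonnegative on `[0,T]`. -/
theorem mass_action_solutions_nonneg
    {N M : ℕ} (νp νm : Fin M → Fin N → ℕ) (kp km : Fin M → ℝ)
    (hkp : ∀ i, 0 < kp i) (hkm : ∀ i, 0 < km i)
    (T : ℝ) (hT : 0 ≤ T)
    (c : ℝ → Fin N → ℝ)
    (hcderiv : ∀ t ∈ Set.Icc (0 : ℝ) T, ∀ j,
      HasDerivAt (fun u => c u j)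
        (∑ i, ((νm i j : ℝ) - (νp i j : ℝ)) *
          (kp i * ∏ l, c t l ^ νp i l - km i * ∏ l, c t l ^ νm i l)) t)
    (hinit : ∀ j, 0 ≤ c 0 j) :
    ∀ t ∈ Set.Icc (0 : ℝ) T, ∀ j, 0 ≤ c t j := by
  classical
  -- the vector field
  set B : Fin N → (Fin N → ℝ) → ℝ := fun j x =>
    ∑ i, ((νm i j : ℝ) - (νp i j : ℝ)) *
      (kp i * ∏ l, x l ^ νp i l - km i * ∏ l, x l ^ νm i l) with hB
  have hBcd : ∀ j, ContDiff ℝ 1 (B j) := by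
    intro j
    apply ContDiff.sum
    intro i _
    exact contDiff_const.mul
      ((contDiff_const.mul (contDiff_prod_pow _ _)).sub
        (contDiff_const.mul (contDiff_prod_pow _ _)))
  -- continuity of the solution
  have hcont : ContinuousOn c (Icc 0 T) := by
    rw [continuousOn_pi]
    intro j t ht
    exact ((hcderiv t ht j).continuousAt).continuousWithinAt
  -- bound on the solution
  obtain ⟨R₀, hR₀⟩ := (isCompact_Icc (a := (0:ℝ)) (b := T)).exists_bound_of_continuousOn hcont
  set R : ℝ := max R₀ 0 with hRdef
  have hR0 : 0 ≤ R := le_max_right _ _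
  have hR : ∀ t ∈ Icc (0:ℝ) T, ∀ l, |c t l| ≤ R := by
    intro t ht l
    calc |c t l| = ‖c t l‖ := rfl
      _ ≤ ‖c t‖ := norm_le_pi_norm (c t) l
      _ ≤ R₀ := hR₀ t ht
      _ ≤ R := le_max_left _ _
  -- Lipschitz constants on the ball of radius R
  have hC : ∀ j, ∃ C : ℝ, ∀ x ∈ closedBall (0 : Fin N → ℝ) R, ‖fderiv ℝ (B j) x‖ ≤ C := by
    intro j
    exact (isCompact_closedBall _ _).exists_bound_of_continuousOn
      (((hBcd j).continuous_fderiv one_ne_zero).continuousOn)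
  choose C hCb using hC
  set K : ℝ := 1 + ∑ j, |C j| with hKdef
  have hK1 : (1:ℝ) ≤ K := by
    have : (0:ℝ) ≤ ∑ j, |C j| := Finset.sum_nonneg fun j _ => abs_nonneg _
    linarith
  have hKj : ∀ j, |C j| ≤ K - 1 := by
    intro j
    have := Finset.single_le_sum (f := fun j => |C j|) (fun l _ => abs_nonneg _)
      (Finset.mem_univ j)
    simp only [hKdef]; linarith
  -- Lipschitz estimate
  have hlip : ∀ j, ∀ x ∈ closedBall (0 : Fin N → ℝ) R, ∀ y ∈ closedBall (0 : Fin N → ℝ) R,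
      ‖B j x - B j y‖ ≤ |C j| * ‖x - y‖ := by
    intro j x hx y hy
    have := (convex_closedBall (0 : Fin N → ℝ) R).norm_image_sub_le_of_norm_fderiv_le
      (f := B j) (fun z _ => ((hBcd j).differentiable one_ne_zero).differentiableAt)
      (fun z hz => le_trans (hCb j z hz) (le_abs_self _)) hy hx
    exact this
  -- key estimate for every ε > 0
  have key : ∀ ε > 0, ∀ t ∈ Icc (0:ℝ) T, ∀ j, -(ε * Real.exp (K * t)) ≤ c t j := by
    intro ε hε
    by_contra hcon
    push_neg at hcon
    obtain ⟨t₁, ht₁, j₁, hj₁⟩ := hcon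
    -- the "bad" set
    set w : Fin N → ℝ → ℝ := fun j t => c t j + ε * Real.exp (K * t) with hw
    set A : Set ℝ := ⋃ j, {t | t ∈ Icc (0:ℝ) T ∧ w j t ≤ 0} with hA
    have hAne : A.Nonempty := ⟨t₁, Set.mem_iUnion.mpr ⟨j₁, ht₁, by simp only [hw]; linarith⟩⟩
    have hAbdd : BddBelow A := ⟨0, fun t ht => by
      obtain ⟨j, hj, -⟩ := Set.mem_iUnion.mp ht; exact hj.1⟩
    have hAIcc : A ⊆ Icc 0 T := fun t ht => (Set.mem_iUnion.mp ht).choose_spec.1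
    have hwcont : ∀ j, ContinuousOn (w j) (Icc 0 T) := by
      intro j
      apply ContinuousOn.add
      · exact fun t ht => ((hcderiv t ht j).continuousAt).continuousWithinAt
      · exact (Continuous.continuousOn (continuous_const.mul
          (Real.continuous_exp.comp (continuous_const.mul continuous_id))))
    have hAclosed : IsClosed A := by
      apply isClosed_iUnion_of_finite
      intro j
      have : {t | t ∈ Icc (0:ℝ) T ∧ w j t ≤ 0} = Icc 0 T ∩ (w j) ⁻¹' (Iic 0) := by
        ext t; simp [Set.mem_inter_iff, and_comm]
      rw [this]
      exact ContinuousOn.preimage_isClosed_of_isClosed (hwcont j) isClosed_Icc isClosed_Iic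
    set t₀ : ℝ := sInf A with ht₀def
    have ht₀A : t₀ ∈ A := hAclosed.csInf_mem hAne hAbdd
    obtain ⟨j, ht₀Icc, hwj0⟩ : ∃ j, t₀ ∈ Icc (0:ℝ) T ∧ w j t₀ ≤ 0 := by
      obtain ⟨j, hj⟩ := Set.mem_iUnion.mp ht₀A; exact ⟨j, hj.1, hj.2⟩
    have ht₀pos : 0 < t₀ := by
      rcases lt_or_eq_of_le ht₀Icc.1 with h | h
      · exact h
      · exfalso
        have h0 := hwj0
        rw [← h] at h0
        simp only [hw, mul_zero, Real.exp_zero, mul_one] at h0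
        have := hinit j
        linarith
    -- before t₀ all components of w are positive
    have hbefore : ∀ s ∈ Ico (0:ℝ) t₀, ∀ l, 0 < w l s := by
      intro s hs l
      by_contra hns
      push_neg at hns
      have hsA : s ∈ A := Set.mem_iUnion.mpr
        ⟨l, ⟨⟨hs.1, le_trans hs.2.le ht₀Icc.2⟩, hns⟩⟩
      exact absurd (csInf_le hAbdd hsA) (not_le.mpr hs.2)
    -- at t₀ all components of w are nonnegative (by left continuity)
    have hatt0 : ∀ l, 0 ≤ w l t₀ := by
      intro l
      have hct : ContinuousAt (w l) t₀ :=
        ((hcderiv t₀ ht₀Icc l).continuousAt).add ((continuous_const.mul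
          (Real.continuous_exp.comp (continuous_const.mul continuous_id))).continuousAt)
      have htend : Tendsto (w l) (𝓝[<] t₀) (𝓝 (w l t₀)) :=
        (hct.continuousWithinAt).tendsto
      refine ge_of_tendsto htend ?_
      filter_upwards [Ioo_mem_nhdsLT ht₀pos] with s hs
      exact (hbefore s ⟨hs.1.le, hs.2⟩ l).le
    have hwj0' : w j t₀ = 0 := le_antisymm hwj0 (hatt0 j)
    -- setup at time t₀
    set m : ℝ := ε * Real.exp (K * t₀) with hm
    have hmpos : 0 < m := by positivity
    have hcj : c t₀ j = -m := by
      have : c t₀ j + m = 0 := hwj0'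
      linarith
    have hclow : ∀ l, -m ≤ c t₀ l := fun l => by
      have : 0 ≤ c t₀ l + m := hatt0 l
      linarith
    set x : Fin N → ℝ := c t₀ with hx
    set y : Fin N → ℝ := fun l => max (x l) 0 with hy
    have hynn : ∀ l, 0 ≤ y l := fun l => le_max_right _ _
    have hyj : y j = 0 := by
      simp only [hy, hx, hcj]
      exact max_eq_right (by linarith)
    have hxball : x ∈ closedBall (0 : Fin N → ℝ) R := by
      rw [mem_closedBall_zero_iff, pi_norm_le_iff_of_nonneg hR0]
      intro l
      exact hR t₀ ht₀Icc l
    have hyball : y ∈ closedBall (0 : Fin N → ℝ) R := by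
      rw [mem_closedBall_zero_iff, pi_norm_le_iff_of_nonneg hR0]
      intro l
      have h1 := hR t₀ ht₀Icc l
      rw [Real.norm_eq_abs]
      rcases le_or_gt (x l) 0 with h | h
      · simp only [hy]; rw [max_eq_right h]; simpa using hR0
      · simp only [hy]; rw [max_eq_left h.le]; exact h1
    have hxy : ‖x - y‖ ≤ m := by
      rw [pi_norm_le_iff_of_nonneg hmpos.le]
      intro l
      simp only [Pi.sub_apply, Real.norm_eq_abs, hy]
      rcases le_or_gt (x l) 0 with h | h
      · rw [max_eq_right h]
        rw [abs_le]
        constructor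
        · simpa using hclow l
        · linarith
      · rw [max_eq_left h.le]
        simpa using hmpos.le
    -- quasipositivity at y
    have hqp : 0 ≤ B j y :=
      massAction_quasipos νp νm kp km hkp hkm y hynn j hyj
    -- lower bound on B j x
    have hBlow : -((K - 1) * m) ≤ B j x := by
      have h1 : ‖B j x - B j y‖ ≤ |C j| * ‖x - y‖ := hlip j x hxball y hyball
      have h2 : |C j| * ‖x - y‖ ≤ (K - 1) * m := by
        apply mul_le_mul (hKj j) hxy (norm_nonneg _)
        linarith [hK1]
      have h3 : |B j x - B j y| ≤ (K - 1) * m := le_trans h1 h2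
      have := abs_le.mp h3
      linarith
    -- derivative of w j at t₀ is positive, contradiction with minimality
    have hwderiv : HasDerivAt (w j) (B j x + ε * (K * Real.exp (K * t₀))) t₀ := by
      have h1 : HasDerivAt (fun u => c u j) (B j x) t₀ := hcderiv t₀ ht₀Icc j
      have h2 : HasDerivAt (fun t : ℝ => ε * Real.exp (K * t))
          (ε * (Real.exp (K * t₀) * K)) t₀ := by
        have := ((hasDerivAt_id t₀).const_mul K).exp
        simpa using this.const_mul ε
      have := h1.add h2
      simp only [hw]
      exact this.congr_deriv (by ring)
    have hdpos : 0 < B j x + ε * (K * Real.exp (K * t₀)) := by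
      have : ε * (K * Real.exp (K * t₀)) = K * m := by rw [hm]; ring
      rw [this]
      nlinarith [hBlow, hmpos]
    -- slope argument
    have hslope := hasDerivAt_iff_tendsto_slope.mp hwderiv
    have hslope' : Tendsto (slope (w j) t₀) (𝓝[<] t₀)
        (𝓝 (B j x + ε * (K * Real.exp (K * t₀)))) :=
      hslope.mono_left (nhdsWithin_mono _ (fun s hs => (ne_of_lt hs : s ≠ t₀)))
    have hev : ∀ᶠ s in 𝓝[<] t₀, 0 < slope (w j) t₀ s :=
      hslope'.eventually (eventually_gt_nhds hdpos)
    have hev2 : ∀ᶠ s in 𝓝[<] t₀, s ∈ Ioo (0:ℝ) t₀ :=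
      Ioo_mem_nhdsLT ht₀pos
    obtain ⟨s, hs1, hs2⟩ := (hev.and hev2).exists
    have hwspos : 0 < w j s := hbefore s ⟨hs2.1.le, hs2.2⟩ j
    have : slope (w j) t₀ s = (w j s) / (s - t₀) := by
      rw [slope_def_field, hwj0']
      simp only [sub_zero]
    rw [this] at hs1
    have hneg : s - t₀ < 0 := by linarith [hs2.2]
    have : w j s / (s - t₀) < 0 := div_neg_of_pos_of_neg hwspos hneg
    linarith
  -- conclude by letting ε → 0
  intro t ht j
  refine le_of_forall_pos_le_add ?_
  intro ε hε
  have hexp : 0 < Real.exp (K * t) := Real.exp_pos _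
  have := key (ε / Real.exp (K * t)) (by positivity) t ht j
  rw [div_mul_cancel₀ _ hexp.ne'] at this
  linarith
end
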